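/- arXiv:1707.07115 — 9 statements merged into one kernel-verified Lean document; each statement's English description precedes it below -/
import Mathlib

section
/- Let $V \subset \mathbb{R}^n$ be a linear subspace such that for all orthogonal vectors $a, b \in V$ the componentwise product $a \diamond b$ (defined by $(a\diamond b)_i = a_i b_i$) again lies in $V$. Then $V$ admits an orthonormal basis $\{u_1,\dots,u_k\}$ such that for every $i \neq j$, the componentwise product $u_i \diamond u_j$ lies in $\mathbb{R} u_i \cup \mathbb{R} u_j$. -/
open Finset

namespace SS
variable {n : ℕ}

def dot (x y : Fin n → ℝ) : ℝ := ∑ k, x k * y k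

lemma dot_comm (x y : Fin n → ℝ) : dot x y = dot y x := by
  unfold dot; exact Finset.sum_congr rfl fun k _ => mul_comm _ _

lemma dot_add_left (x y z : Fin n → ℝ) : dot (x + y) z = dot x z + dot y z := by
  unfold dot; rw [← Finset.sum_add_distrib]
  exact Finset.sum_congr rfl fun k _ => by simp [add_mul]

lemma dot_sub_left (x y z : Fin n → ℝ) : dot (x - y) z = dot x z - dot y z := by
  unfold dot; rw [← Finset.sum_sub_distrib]
  exact Finset.sum_congr rfl fun k _ => by simp [sub_mul]

lemma dot_smul_left (c : ℝ) (x y : Fin n → ℝ) : dot (c • x) y = c * dot x y := by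
  unfold dot; rw [Finset.mul_sum]
  exact Finset.sum_congr rfl fun k _ => by simp [mul_assoc]

lemma dot_add_right (x y z : Fin n → ℝ) : dot x (y + z) = dot x y + dot x z := by
  rw [dot_comm, dot_add_left, dot_comm y x, dot_comm z x]

lemma dot_sub_right (x y z : Fin n → ℝ) : dot x (y - z) = dot x y - dot x z := by
  rw [dot_comm, dot_sub_left, dot_comm y x, dot_comm z x]

lemma dot_smul_right (c : ℝ) (x y : Fin n → ℝ) : dot x (c • y) = c * dot x y := by
  rw [dot_comm, dot_smul_left, dot_comm y x]

lemma dot_zero_left (y : Fin n → ℝ) : dot 0 y = 0 := by unfold dot; simp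

lemma dot_zero_right (y : Fin n → ℝ) : dot y 0 = 0 := by unfold dot; simp

lemma dot_self_nonneg (x : Fin n → ℝ) : 0 ≤ dot x x :=
  Finset.sum_nonneg fun k _ => mul_self_nonneg _

lemma dot_self_eq_zero {x : Fin n → ℝ} (h : dot x x = 0) : x = 0 := by
  funext k
  have := (Finset.sum_eq_zero_iff_of_nonneg (fun k _ => mul_self_nonneg (x k))).mp h k (mem_univ k)
  exact mul_self_eq_zero.mp this

lemma dot_self_pos {x : Fin n → ℝ} (h : x ≠ 0) : 0 < dot x x := by
  rcases lt_or_eq_of_le (dot_self_nonneg x) with h1 | h1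
  · exact h1
  · exact absurd (dot_self_eq_zero h1.symm) h

lemma dot_mul_assoc (x y z : Fin n → ℝ) : dot (x * y) z = dot x (y * z) := by
  unfold dot; exact Finset.sum_congr rfl fun k _ => by simp [Pi.mul_apply]; ring

lemma dot_sum_left {ι : Type*} (s : Finset ι) (f : ι → Fin n → ℝ) (y : Fin n → ℝ) :
    dot (∑ t ∈ s, f t) y = ∑ t ∈ s, dot (f t) y := by
  unfold dot
  rw [Finset.sum_comm]
  exact Finset.sum_congr rfl fun k _ => by rw [Finset.sum_apply, Finset.sum_mul]

lemma exists_proj (V : Submodule ℝ (Fin n → ℝ)) (x : Fin n → ℝ) :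
    ∃ p ∈ V, ∀ v ∈ V, dot (x - p) v = 0 := by
  let e := (WithLp.linearEquiv 2 ℝ (Fin n → ℝ))
  let V' : Submodule ℝ (EuclideanSpace ℝ (Fin n)) := V.comap e.toLinearMap
  have : CompleteSpace V' := FiniteDimensional.complete ℝ V'
  set x' : EuclideanSpace ℝ (Fin n) := e.symm x with hx'
  refine ⟨e (Submodule.orthogonalProjectionOnto V' x'), (Submodule.orthogonalProjectionOnto V' x').2, ?_⟩
  intro v hv
  have h := Submodule.sub_starProjection_mem_orthogonal (K := V') x'
  have h2 := (Submodule.mem_orthogonal V' _).mp h (e.symm v) hv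
  have h3 : (inner ℝ (e.symm v) (x' - (Submodule.orthogonalProjectionOnto V' x' : EuclideanSpace ℝ (Fin n))) : ℝ) = 0 := h2
  rw [PiLp.inner_apply] at h3
  have h4 : ∀ k, (x - e (Submodule.orthogonalProjectionOnto V' x')) k * v k
      = (inner (𝕜 := ℝ) (e.symm v k) ((x' - (Submodule.orthogonalProjectionOnto V' x' : EuclideanSpace ℝ (Fin n))) k)) := by
    intro k
    show (x k - (Submodule.orthogonalProjectionOnto V' x' : EuclideanSpace ℝ (Fin n)) k) * v k
      = (inner (𝕜 := ℝ) (v k) (x k - (Submodule.orthogonalProjectionOnto V' x' : EuclideanSpace ℝ (Fin n)) k))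
    rw [RCLike.inner_apply]
    simp
  unfold dot
  rw [Finset.sum_congr rfl (fun k _ => h4 k)]
  exact h3

end SS

namespace SS
variable {n : ℕ}

lemma sq_diff_mem (V : Submodule ℝ (Fin n → ℝ))
    (hV : ∀ a ∈ V, ∀ b ∈ V, dot a b = 0 → a * b ∈ V)
    {a b : Fin n → ℝ} (ha : a ∈ V) (hb : b ∈ V) (hab : dot a b = 0)
    (hnorm : dot a a = dot b b) : a * a - b * b ∈ V := by
  have h1 : dot (a + b) (a - b) = 0 := by
    rw [dot_add_left, dot_sub_right, dot_sub_right, hnorm, dot_comm b a, hab]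
    ring
  have h2 := hV (a + b) (V.add_mem ha hb) (a - b) (V.sub_mem ha hb) h1
  have h3 : (a + b) * (a - b) = a * a - b * b := by
    funext k; simp [Pi.mul_apply]; ring
  rwa [h3] at h2

lemma exists_d (V : Submodule ℝ (Fin n → ℝ))
    (hV : ∀ a ∈ V, ∀ b ∈ V, dot a b = 0 → a * b ∈ V)
    {u₀ : Fin n → ℝ} (hu₀V : u₀ ∈ V) (hu₀ : dot u₀ u₀ = 1) :
    ∃ d : Fin n → ℝ, (∀ v ∈ V, dot d v = 0) ∧
      (∀ a ∈ V, ∀ b ∈ V, a * b - (dot a b) • d ∈ V) := by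
  obtain ⟨p, hpV, hperp⟩ := exists_proj V (u₀ * u₀)
  refine ⟨u₀ * u₀ - p, hperp, ?_⟩
  set d := u₀ * u₀ - p with hd
  -- step3 : squares of unit vectors
  have step3 : ∀ u ∈ V, dot u u = 1 → u * u - u₀ * u₀ ∈ V := by
    intro u huV huu
    set c := dot u₀ u with hc
    set w' := u - c • u₀ with hw'def
    have hw'V : w' ∈ V := V.sub_mem huV (V.smul_mem c hu₀V)
    have hw'perp : dot u₀ w' = 0 := by
      rw [hw'def, dot_sub_right, dot_smul_right, hu₀, ← hc]; ring
    by_cases hw' : w' = 0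
    · have hu : u = c • u₀ := by
        have := sub_eq_zero.mp hw'
        rw [this]
      have hc2 : c ^ 2 = 1 := by
        have := huu
        rw [hu, dot_smul_left, dot_smul_right, hu₀] at this
        nlinarith [this]
      have : u * u = u₀ * u₀ := by
        funext k; rw [hu]; simp [Pi.mul_apply]
        nlinarith [hc2]
      rw [this]; simp
    · set σ := Real.sqrt (dot w' w') with hσdef
      have hσsq : σ ^ 2 = dot w' w' := Real.sq_sqrt (dot_self_nonneg w')
      have hσpos : 0 < σ := Real.sqrt_pos.mpr (dot_self_pos hw')
      set w := σ⁻¹ • w' with hwdef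
      have hwV : w ∈ V := V.smul_mem _ hw'V
      have hww : dot w w = 1 := by
        rw [hwdef, dot_smul_left, dot_smul_right, ← hσsq]
        field_simp
      have hu₀w : dot u₀ w = 0 := by
        rw [hwdef, dot_smul_right, hw'perp]; ring
      have huw : u = c • u₀ + σ • w := by
        rw [hwdef, smul_smul, mul_inv_cancel₀ (ne_of_gt hσpos), one_smul, hw'def]
        abel
      have hc2 : c ^ 2 + σ ^ 2 = 1 := by
        have h := huu
        rw [huw] at h
        simp only [dot_add_left, dot_add_right, dot_smul_left, dot_smul_right] at h
        rw [hu₀, hww, hu₀w, dot_comm w u₀, hu₀w] at h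
        nlinarith [h]
      have hmem1 : u₀ * w ∈ V := hV u₀ hu₀V w hwV hu₀w
      have hmem2 : w * w - u₀ * u₀ ∈ V := by
        apply sq_diff_mem V hV hwV hu₀V
        · rw [dot_comm]; exact hu₀w
        · rw [hww, hu₀]
      have key : u * u - u₀ * u₀ = (σ ^ 2) • (w * w - u₀ * u₀) + (2 * c * σ) • (u₀ * w) := by
        funext k
        rw [huw]
        simp only [Pi.add_apply, Pi.sub_apply, Pi.mul_apply, Pi.smul_apply, smul_eq_mul]
        have : c ^ 2 - 1 = -σ ^ 2 := by linarith
        nlinarith [this, sq_nonneg (u₀ k), sq_nonneg (w k)]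
      rw [key]
      exact V.add_mem (V.smul_mem _ hmem2) (V.smul_mem _ hmem1)
  -- step4 : all squares
  have step4 : ∀ a ∈ V, a * a - (dot a a) • d ∈ V := by
    intro a haV
    by_cases ha : a = 0
    · rw [ha]; simp [dot_zero_left]
    · set τ := Real.sqrt (dot a a) with hτdef
      have hτsq : τ ^ 2 = dot a a := Real.sq_sqrt (dot_self_nonneg a)
      have hτpos : 0 < τ := Real.sqrt_pos.mpr (dot_self_pos ha)
      set u := τ⁻¹ • a with hudef
      have huV : u ∈ V := V.smul_mem _ haV
      have huu : dot u u = 1 := by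
        rw [hudef, dot_smul_left, dot_smul_right, ← hτsq]
        field_simp
      have h1 : u * u - u₀ * u₀ ∈ V := step3 u huV huu
      have h2 : u * u - d ∈ V := by
        have : u * u - d = (u * u - u₀ * u₀) + p := by rw [hd]; abel
        rw [this]
        exact V.add_mem h1 hpV
      have hinv : τ ^ 2 * (τ⁻¹) ^ 2 = 1 := by field_simp
      have key : a * a - (dot a a) • d = (τ ^ 2) • (u * u - d) := by
        rw [← hτsq, hudef]
        funext k
        simp only [Pi.smul_apply, Pi.sub_apply, Pi.mul_apply, smul_eq_mul]
        linear_combination (-(a k * a k)) * hinv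
      rw [key]
      exact V.smul_mem _ h2
  intro a haV b hbV
  have h1 := step4 (a + b) (V.add_mem haV hbV)
  have h2 := step4 a haV
  have h3 := step4 b hbV
  have hdot : dot (a + b) (a + b) = dot a a + 2 * dot a b + dot b b := by
    rw [dot_add_left, dot_add_right, dot_add_right, dot_comm b a]; ring
  have key : a * b - (dot a b) • d =
      (2⁻¹ : ℝ) • (((a+b)*(a+b) - (dot (a+b) (a+b)) • d) - (a*a - (dot a a) • d) - (b*b - (dot b b) • d)) := by
    rw [hdot]
    funext k
    simp only [Pi.smul_apply, Pi.sub_apply, Pi.add_apply, Pi.mul_apply, smul_eq_mul]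
    ring
  rw [key]
  exact V.smul_mem _ (V.sub_mem (V.sub_mem h1 h2) h3)

end SS

namespace SS
variable {n : ℕ}

section Wclosure
variable (V : Submodule ℝ (Fin n → ℝ))
  (hV : ∀ a ∈ V, ∀ b ∈ V, dot a b = 0 → a * b ∈ V)
  (d : Fin n → ℝ)
  (hdperp : ∀ v ∈ V, dot d v = 0)
  (hB : ∀ a ∈ V, ∀ b ∈ V, a * b - (dot a b) • d ∈ V)
  (haux : ∀ y ∈ V, ∃ a, a ∈ V ∧ a ≠ 0 ∧ dot a y = 0)

include hV hdperp hB haux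

lemma muld_mem : ∀ b ∈ V, b * d ∈ V := by
  intro b hbV
  obtain ⟨a, haV, ha0, hab⟩ := haux b hbV
  have hdb : dot b d = 0 := by rw [dot_comm]; exact hdperp b hbV
  set q := dot a a with hq
  have hqpos : 0 < q := dot_self_pos ha0
  have habV : a * b ∈ V := hV a haV b hbV hab
  have hXV : a * (a * b) - (dot a (a * b)) • d ∈ V := hB a haV (a * b) habV
  have hBaaV : a * a - q • d ∈ V := hB a haV a haV
  have hYV' : b * (a * a - q • d) - (dot b (a * a - q • d)) • d ∈ V :=
    hB b hbV _ hBaaV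
  have e1 : dot b (a * a - q • d) = dot a (a * b) := by
    rw [dot_sub_right, dot_smul_right, hdb, dot_comm b (a*a), dot_mul_assoc]
    ring
  rw [e1] at hYV'
  have hsub : (a * (a * b) - (dot a (a * b)) • d) - (b * (a * a - q • d) - (dot a (a * b)) • d)
      = q • (b * d) := by
    funext k
    simp only [Pi.sub_apply, Pi.mul_apply, Pi.smul_apply, smul_eq_mul]
    ring
  have hmem : q • (b * d) ∈ V := by rw [← hsub]; exact V.sub_mem hXV hYV'
  have : b * d = q⁻¹ • (q • (b * d)) := by
    rw [smul_smul, inv_mul_cancel₀ (ne_of_gt hqpos), one_smul]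
  rw [this]
  exact V.smul_mem _ hmem

lemma dot_abd (hd0 : d ≠ 0) : ∀ a ∈ V, ∀ b ∈ V, dot a b = 0 → dot a (b * d) = 0 := by
  intro a haV b hbV hab
  have habV : a * b ∈ V := hV a haV b hbV hab
  have hSab : (a * b) * d ∈ V := muld_mem V hV d hdperp hB haux (a*b) habV
  have hSb : b * d ∈ V := muld_mem V hV d hdperp hB haux b hbV
  have hZ : a * (b * d) - (dot a (b * d)) • d ∈ V := hB a haV (b * d) hSb
  have key : (dot a (b * d)) • d = ((a * b) * d) - (a * (b * d) - (dot a (b * d)) • d) := by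
    funext k
    simp only [Pi.sub_apply, Pi.mul_apply, Pi.smul_apply, smul_eq_mul]
    ring
  have hmem : (dot a (b * d)) • d ∈ V := by rw [key]; exact V.sub_mem hSab hZ
  have h0 : dot d ((dot a (b * d)) • d) = 0 := hdperp _ hmem
  rw [dot_smul_right] at h0
  rcases mul_eq_zero.mp h0 with h | h
  · exact h
  · exact absurd (dot_self_eq_zero h) hd0

lemma d_mul_smul (hd0 : d ≠ 0) : ∀ v ∈ V, ∃ c : ℝ, v * d = c • v := by
  intro v hvV
  by_cases hv0 : v = 0
  · exact ⟨0, by rw [hv0]; funext k; simp⟩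
  · have hq : dot v v ≠ 0 := ne_of_gt (dot_self_pos hv0)
    set c := dot (v * d) v / dot v v with hc
    have hSv : v * d ∈ V := muld_mem V hV d hdperp hB haux v hvV
    set w := v * d - c • v with hw
    have hwV : w ∈ V := V.sub_mem hSv (V.smul_mem _ hvV)
    have hwv : dot w v = 0 := by
      rw [hw, dot_sub_left, dot_smul_left, hc]
      field_simp
      ring
    have hwvd : dot w (v * d) = 0 :=
      dot_abd V hV d hdperp hB haux hd0 w hwV v hvV hwv
    have hww : dot w w = 0 := by
      rw [hw, dot_sub_right, dot_smul_right, hwvd, hwv]; ring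
    have : w = 0 := dot_self_eq_zero hww
    refine ⟨c, ?_⟩
    rw [hw] at this
    exact sub_eq_zero.mp this

lemma dd_mem {u₀ : Fin n → ℝ} (hu₀V : u₀ ∈ V) (hu₀ : dot u₀ u₀ = 1) :
    d * d ∈ V ⊔ (Submodule.span ℝ {d}) := by
  set c := dot u₀ (u₀ * d) with hc
  have hSa : u₀ * d ∈ V := muld_mem V hV d hdperp hB haux u₀ hu₀V
  have hZ : u₀ * (u₀ * d) - c • d ∈ V := hB u₀ hu₀V (u₀ * d) hSa
  have hBaa : u₀ * u₀ - (1:ℝ) • d ∈ V := by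
    have := hB u₀ hu₀V u₀ hu₀V
    rwa [hu₀] at this
  have hY : (u₀ * u₀ - (1:ℝ) • d) * d ∈ V :=
    muld_mem V hV d hdperp hB haux _ hBaa
  have key : d * d = ((u₀ * (u₀ * d) - c • d) - ((u₀ * u₀ - (1:ℝ) • d) * d)) + c • d := by
    funext k
    simp only [Pi.add_apply, Pi.sub_apply, Pi.mul_apply, Pi.smul_apply, smul_eq_mul]
    ring
  rw [key]
  apply Submodule.add_mem
  · exact Submodule.mem_sup_left (V.sub_mem hZ hY)
  · exact Submodule.mem_sup_right (Submodule.smul_mem _ _ (Submodule.mem_span_singleton_self d))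

lemma W_closed {u₀ : Fin n → ℝ} (hu₀V : u₀ ∈ V) (hu₀ : dot u₀ u₀ = 1) :
    ∀ x ∈ V ⊔ (Submodule.span ℝ {d}), ∀ y ∈ V ⊔ (Submodule.span ℝ {d}),
      x * y ∈ V ⊔ (Submodule.span ℝ {d}) := by
  intro x hx y hy
  rw [Submodule.mem_sup] at hx hy
  obtain ⟨v, hvV, x', hx', hxeq⟩ := hx
  obtain ⟨w, hwV, y', hy', hyeq⟩ := hy
  rw [Submodule.mem_span_singleton] at hx' hy'
  obtain ⟨s, rfl⟩ := hx'
  obtain ⟨t, rfl⟩ := hy'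
  have key : x * y = ((v * w - (dot v w) • d) + t • (v * d) + s • (w * d) + (s * t) • (d * d))
      + (dot v w) • d := by
    rw [← hxeq, ← hyeq]
    funext k
    simp only [Pi.add_apply, Pi.sub_apply, Pi.mul_apply, Pi.smul_apply, smul_eq_mul]
    ring
  rw [key]
  apply Submodule.add_mem
  · apply Submodule.add_mem
    · apply Submodule.add_mem
      · apply Submodule.add_mem
        · exact Submodule.mem_sup_left (hB v hvV w hwV)
        · exact Submodule.mem_sup_left (Submodule.smul_mem _ _ (muld_mem V hV d hdperp hB haux v hvV))
      · exact Submodule.mem_sup_left (Submodule.smul_mem _ _ (muld_mem V hV d hdperp hB haux w hwV))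
    · exact Submodule.smul_mem _ _ (dd_mem V hV d hdperp hB haux hu₀V hu₀)
  · exact Submodule.mem_sup_right (Submodule.smul_mem _ _ (Submodule.mem_span_singleton_self d))

end Wclosure
end SS

namespace SS
variable {n : ℕ}

lemma exists_level_indicator (W : Submodule ℝ (Fin n → ℝ))
    (hWmul : ∀ x ∈ W, ∀ y ∈ W, x * y ∈ W)
    {y : Fin n → ℝ} (hyW : y ∈ W) {c : ℝ} (hc : c ≠ 0) :
    ∃ f ∈ W, ∀ i, f i = if y i = c then 1 else 0 := by
  classical
  have pow_mem : ∀ s : Finset ℝ, y * ∏ r ∈ s, (y - r • (1 : Fin n → ℝ)) ∈ W := by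
    intro s
    induction s using Finset.induction with
    | empty => simpa using hyW
    | @insert r s hr ih =>
      rw [Finset.prod_insert hr]
      have key : y * ((y - r • (1 : Fin n → ℝ)) * ∏ x ∈ s, (y - x • (1 : Fin n → ℝ)))
          = y * (y * ∏ x ∈ s, (y - x • (1 : Fin n → ℝ)))
            - r • (y * ∏ x ∈ s, (y - x • (1 : Fin n → ℝ))) := by
        funext k
        simp only [Pi.mul_apply, Pi.sub_apply, Pi.smul_apply, Pi.one_apply, smul_eq_mul]
        ring
      rw [key]
      exact W.sub_mem (hWmul y hyW _ ih) (W.smul_mem _ ih)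
  set R := (Finset.image y Finset.univ).erase c with hR
  set γ := c * ∏ r ∈ R, (c - r) with hγdef
  have hγ : γ ≠ 0 := by
    apply mul_ne_zero hc
    rw [Finset.prod_ne_zero_iff]
    intro r hr
    exact sub_ne_zero.mpr (Ne.symm (Finset.ne_of_mem_erase hr))
  set q := y * ∏ r ∈ R, (y - r • (1 : Fin n → ℝ)) with hq
  have hqW : q ∈ W := pow_mem R
  have hq_val : ∀ i, q i = if y i = c then γ else 0 := by
    intro i
    have happ : q i = y i * ∏ r ∈ R, (y i - r) := by
      rw [hq, Pi.mul_apply, Finset.prod_apply]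
      congr 1
      exact Finset.prod_congr rfl fun r _ => by simp
    rw [happ]
    by_cases h : y i = c
    · rw [h, if_pos rfl, hγdef]
    · rw [if_neg h]
      by_cases h0 : y i = 0
      · rw [h0]; ring
      · have hmem : y i ∈ R := by
          rw [hR, Finset.mem_erase]
          exact ⟨h, Finset.mem_image_of_mem y (Finset.mem_univ i)⟩
        rw [Finset.prod_eq_zero hmem (sub_self (y i))]
        ring
  refine ⟨γ⁻¹ • q, W.smul_mem _ hqW, ?_⟩
  intro i
  rw [Pi.smul_apply, smul_eq_mul, hq_val i]
  by_cases h : y i = c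
  · rw [if_pos h, if_pos h, inv_mul_cancel₀ hγ]
  · rw [if_neg h, if_neg h, mul_zero]

lemma exists_atom (W : Submodule ℝ (Fin n → ℝ))
    (hWmul : ∀ x ∈ W, ∀ y ∈ W, x * y ∈ W)
    (hW0 : ∃ x ∈ W, x ≠ (0 : Fin n → ℝ)) :
    ∃ f ∈ W, (∀ i, f i = 0 ∨ f i = 1) ∧ f ≠ 0 ∧ ∀ x ∈ W, ∃ c : ℝ, x * f = c • f := by
  classical
  set P : ℕ → Prop := fun m => ∃ f, f ∈ W ∧ (∀ i, f i = 0 ∨ f i = 1) ∧ f ≠ 0 ∧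
    (Finset.univ.filter (fun i => f i = 1)).card = m with hP
  have hex : ∃ m, P m := by
    obtain ⟨x, hxW, hx0⟩ := hW0
    have : ∃ i, x i ≠ 0 := by
      by_contra h
      push_neg at h
      exact hx0 (funext fun i => h i)
    obtain ⟨i₀, hi₀⟩ := this
    obtain ⟨f, hfW, hf⟩ := exists_level_indicator W hWmul hxW hi₀
    refine ⟨_, f, hfW, fun i => ?_, ?_, rfl⟩
    · rw [hf i]; by_cases h : x i = x i₀ <;> simp [h]
    · intro h0
      have := hf i₀
      rw [h0] at this
      simp at this
  set m₀ := Nat.find hex with hm₀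
  obtain ⟨f, hfW, hf01, hf0, hcard⟩ := Nat.find_spec hex
  refine ⟨f, hfW, hf01, hf0, ?_⟩
  intro x hxW
  set y := x * f with hy
  have hyW : y ∈ W := hWmul x hxW f hfW
  have hyval : ∀ i, f i = 0 → y i = 0 := by
    intro i hi
    rw [hy, Pi.mul_apply, hi, mul_zero]
  by_cases hcst : ∀ i j, f i = 1 → f j = 1 → y i = y j
  · have : ∃ i₀, f i₀ = 1 := by
      by_contra h
      push_neg at h
      apply hf0
      funext i
      rcases hf01 i with h0 | h1
      · exact h0
      · exact absurd h1 (h i)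
    obtain ⟨i₀, hi₀⟩ := this
    refine ⟨y i₀, ?_⟩
    funext i
    rcases hf01 i with h0 | h1
    · rw [Pi.smul_apply, h0, smul_eq_mul, mul_zero]
      exact hyval i h0
    · rw [Pi.smul_apply, h1, smul_eq_mul, mul_one]
      exact hcst i i₀ h1 hi₀
  · exfalso
    push_neg at hcst
    obtain ⟨i, j, hfi, hfj, hij⟩ := hcst
    -- pick i' with y i' ≠ 0 and j' with y j' ≠ y i', f at both = 1
    obtain ⟨i', j', hfi', hfj', hyi', hyj'⟩ :
        ∃ i' j', f i' = 1 ∧ f j' = 1 ∧ y i' ≠ 0 ∧ y j' ≠ y i' := by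
      by_cases h : y i ≠ 0
      · exact ⟨i, j, hfi, hfj, h, Ne.symm hij⟩
      · push_neg at h
        refine ⟨j, i, hfj, hfi, ?_, ?_⟩
        · rw [h] at hij; exact Ne.symm hij
        · rw [h] at hij ⊢; exact hij
    obtain ⟨f', hf'W, hf'⟩ := exists_level_indicator W hWmul hyW hyi'
    have hf'01 : ∀ i, f' i = 0 ∨ f' i = 1 := by
      intro l; rw [hf' l]; by_cases h : y l = y i' <;> simp [h]
    have hf'0 : f' ≠ 0 := by
      intro h0
      have := hf' i'
      rw [h0] at this
      simp at this
    have hsub : (Finset.univ.filter (fun l => f' l = 1)) ⊂ (Finset.univ.filter (fun l => f l = 1)) := by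
      constructor
      · intro l hl
        rw [Finset.mem_filter] at hl ⊢
        refine ⟨Finset.mem_univ l, ?_⟩
        have h1 : y l = y i' := by
          by_contra hne
          rw [hf' l, if_neg hne] at hl
          exact one_ne_zero hl.2.symm
        rcases hf01 l with h0 | h1'
        · exfalso
          apply hyi'
          rw [← h1]
          exact hyval l h0
        · exact h1'
      · intro hcon
        have hj' := hcon (Finset.mem_filter.mpr ⟨Finset.mem_univ j', hfj'⟩)
        rw [Finset.mem_filter, hf' j', if_neg hyj'] at hj'
        exact one_ne_zero hj'.2.symm
    have hlt : (Finset.univ.filter (fun l => f' l = 1)).card < Nat.find hex := by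
      rw [← hcard]
      exact Finset.card_lt_card hsub
    exact Nat.find_min hex hlt ⟨f', hf'W, hf'01, hf'0, rfl⟩

end SS

namespace SS
variable {n : ℕ}

lemma indicator_basis_aux : ∀ (N : ℕ) (W : Submodule ℝ (Fin n → ℝ)),
    Module.finrank ℝ W ≤ N → (∀ x ∈ W, ∀ y ∈ W, x * y ∈ W) →
    ∃ (m : ℕ) (g : Fin m → Fin n → ℝ), (∀ t, g t ∈ W) ∧
      (∀ t i, g t i = 0 ∨ g t i = 1) ∧ (∀ t, g t ≠ 0) ∧
      (∀ t s, t ≠ s → g t * g s = 0) ∧ Submodule.span ℝ (Set.range g) = W := by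
  intro N
  induction N with
  | zero =>
    intro W hrank _
    have hbot : W = ⊥ := Submodule.finrank_eq_zero.mp (Nat.le_zero.mp hrank)
    refine ⟨0, Fin.elim0, fun t => t.elim0, fun t => t.elim0, fun t => t.elim0,
      fun t => t.elim0, ?_⟩
    rw [hbot]
    have : Set.range (Fin.elim0 : Fin 0 → Fin n → ℝ) = ∅ := Set.range_eq_empty _
    rw [this, Submodule.span_empty]
  | succ N ih =>
    intro W hrank hWmul
    by_cases hbot : W = ⊥
    · refine ⟨0, Fin.elim0, fun t => t.elim0, fun t => t.elim0, fun t => t.elim0,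
        fun t => t.elim0, ?_⟩
      rw [hbot]
      have : Set.range (Fin.elim0 : Fin 0 → Fin n → ℝ) = ∅ := Set.range_eq_empty _
      rw [this, Submodule.span_empty]
    · obtain ⟨x, hxW, hx0⟩ := Submodule.exists_mem_ne_zero_of_ne_bot hbot
      obtain ⟨f, hfW, hf01, hf0, hatom⟩ := exists_atom W hWmul ⟨x, hxW, hx0⟩
      have hff : f * f = f := by
        funext i
        rcases hf01 i with h | h <;> rw [Pi.mul_apply, h] <;> ring
      set W₀ := W ⊓ LinearMap.ker (LinearMap.mulLeft ℝ f) with hW₀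
      have hW₀le : W₀ ≤ W := inf_le_left
      have hW₀mul : ∀ x ∈ W₀, ∀ y ∈ W₀, x * y ∈ W₀ := by
        intro a ha b hb
        rw [hW₀, Submodule.mem_inf] at ha hb ⊢
        refine ⟨hWmul a ha.1 b hb.1, ?_⟩
        rw [LinearMap.mem_ker, LinearMap.mulLeft_apply] at ha hb ⊢
        have : f * (a * b) = a * (f * b) := by
          funext k; simp only [Pi.mul_apply]; ring
        rw [this, hb.2, mul_zero]
      have hfnotW₀ : f ∉ W₀ := by
        intro hmem
        rw [hW₀, Submodule.mem_inf, LinearMap.mem_ker, LinearMap.mulLeft_apply] at hmem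
        rw [hff] at hmem
        exact hf0 hmem.2
      have hlt : W₀ < W := lt_of_le_of_ne hW₀le (fun h => hfnotW₀ (h ▸ hfW))
      have hrank0 : Module.finrank ℝ W₀ ≤ N := by
        have := Submodule.finrank_lt_finrank_of_lt hlt
        omega
      obtain ⟨m₀, g₀, hg₀W, hg₀01, hg₀0, hg₀disj, hg₀span⟩ := ih W₀ hrank0 hW₀mul
      refine ⟨m₀ + 1, Fin.cons f g₀, ?_, ?_, ?_, ?_, ?_⟩
      · intro t
        refine Fin.cases ?_ ?_ t
        · exact hfW
        · intro s; exact hW₀le (hg₀W s)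
      · intro t
        refine Fin.cases ?_ ?_ t
        · exact hf01
        · intro s; exact hg₀01 s
      · intro t
        refine Fin.cases ?_ ?_ t
        · exact hf0
        · intro s; exact hg₀0 s
      · intro t s hts
        have hker : ∀ z ∈ W₀, f * z = 0 := by
          intro z hz
          rw [hW₀, Submodule.mem_inf, LinearMap.mem_ker, LinearMap.mulLeft_apply] at hz
          exact hz.2
        rcases Fin.eq_zero_or_eq_succ t with rfl | ⟨t', rfl⟩ <;>
          rcases Fin.eq_zero_or_eq_succ s with rfl | ⟨s', rfl⟩
        · exact absurd rfl hts
        · rw [Fin.cons_zero, Fin.cons_succ]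
          exact hker _ (hg₀W s')
        · rw [Fin.cons_succ, Fin.cons_zero, mul_comm]
          exact hker _ (hg₀W t')
        · rw [Fin.cons_succ, Fin.cons_succ]
          exact hg₀disj t' s' (fun h => hts (congrArg Fin.succ h))
      · rw [Fin.range_cons, Submodule.span_insert, hg₀span]
        apply le_antisymm
        · apply sup_le
          · rw [Submodule.span_singleton_le_iff_mem]; exact hfW
          · exact hW₀le
        · intro z hzW
          obtain ⟨c, hc⟩ := hatom z hzW
          rw [Submodule.mem_sup]
          refine ⟨c • f, Submodule.smul_mem _ _ (Submodule.mem_span_singleton_self f),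
            z - c • f, ?_, by abel⟩
          rw [hW₀, Submodule.mem_inf]
          refine ⟨W.sub_mem hzW (W.smul_mem _ hfW), ?_⟩
          rw [LinearMap.mem_ker, LinearMap.mulLeft_apply]
          have : f * (z - c • f) = z * f - c • (f * f) := by
            funext k
            simp only [Pi.mul_apply, Pi.sub_apply, Pi.smul_apply, smul_eq_mul]
            ring
          rw [this, hff, hc]
          abel
  
lemma indicator_basis (W : Submodule ℝ (Fin n → ℝ))
    (hWmul : ∀ x ∈ W, ∀ y ∈ W, x * y ∈ W) :
    ∃ (m : ℕ) (g : Fin m → Fin n → ℝ), (∀ t, g t ∈ W) ∧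
      (∀ t i, g t i = 0 ∨ g t i = 1) ∧ (∀ t, g t ≠ 0) ∧
      (∀ t s, t ≠ s → g t * g s = 0) ∧ Submodule.span ℝ (Set.range g) = W :=
  indicator_basis_aux (Module.finrank ℝ W) W le_rfl hWmul

end SS

namespace SS

lemma helmert (k : ℕ) (w : Fin (k+1) → ℝ) (hw : ∀ t, 0 < w t) :
    ∃ c : Fin k → Fin (k+1) → ℝ,
      (∀ r, ∑ t, w t * c r t = 0) ∧
      (∀ r s, ∑ t, w t * c r t * c s t = if r = s then 1 else 0) ∧
      (∀ r s : Fin k, (r:ℕ) < (s:ℕ) → ∀ t, c r t * c s t = c s 0 * c r t) ∧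
      (∀ x : Fin (k+1) → ℝ, (∑ t, w t * x t = 0) →
        (∀ r, ∑ t, w t * x t * c r t = 0) → x = 0) := by
  classical
  set M : ℕ → ℝ := fun j => ∑ t : Fin (k+1), if (t : ℕ) ≤ j then w t else 0 with hM
  have hMpos : ∀ j, 0 < M j := by
    intro j
    apply Finset.sum_pos'
    · intro t _
      by_cases h : (t:ℕ) ≤ j
      · rw [if_pos h]; exact le_of_lt (hw t)
      · rw [if_neg h]
    · exact ⟨⟨0, Nat.succ_pos k⟩, Finset.mem_univ _, by rw [if_pos (Nat.zero_le j)]; exact hw _⟩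
  have hMsucc : ∀ r : Fin k, M ((r:ℕ)+1) = M (r:ℕ) + w r.succ := by
    intro r
    have key : ∀ t : Fin (k+1), (if (t:ℕ) ≤ (r:ℕ)+1 then w t else 0)
        = (if (t:ℕ) ≤ (r:ℕ) then w t else 0) + (if t = r.succ then w t else 0) := by
      intro t
      have hts : t = r.succ ↔ (t:ℕ) = (r:ℕ)+1 := by
        rw [Fin.ext_iff, Fin.val_succ]
      by_cases h1 : (t:ℕ) ≤ (r:ℕ)
      · rw [if_pos h1, if_pos (by omega), if_neg (by rw [hts]; omega)]; ring
      · by_cases h2 : (t:ℕ) = (r:ℕ)+1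
        · rw [if_pos (by omega), if_neg h1, if_pos (hts.mpr h2)]; ring
        · rw [if_neg (by omega), if_neg h1, if_neg (by rw [hts]; omega)]; ring
    show (∑ t : Fin (k+1), if (t : ℕ) ≤ (r:ℕ)+1 then w t else 0) = _
    rw [Finset.sum_congr rfl (fun t _ => key t), Finset.sum_add_distrib,
      Finset.sum_ite_eq' Finset.univ r.succ w]
    simp
    rfl
  set γ : Fin k → ℝ := fun r => (Real.sqrt (M (r:ℕ) * w r.succ * M ((r:ℕ)+1)))⁻¹ with hγ
  have hProdpos : ∀ r : Fin k, 0 < M (r:ℕ) * w r.succ * M ((r:ℕ)+1) := by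
    intro r
    exact mul_pos (mul_pos (hMpos _) (hw _)) (hMpos _)
  have hγpos : ∀ r, 0 < γ r := by
    intro r
    rw [hγ]
    exact inv_pos.mpr (Real.sqrt_pos.mpr (hProdpos r))
  have hγsq : ∀ r, γ r ^ 2 * (M (r:ℕ) * w r.succ * M ((r:ℕ)+1)) = 1 := by
    intro r
    have h1 : γ r ^ 2 = (M (r:ℕ) * w r.succ * M ((r:ℕ)+1))⁻¹ := by
      simp only [hγ]
      rw [← Real.sqrt_inv, Real.sq_sqrt (inv_nonneg.mpr (le_of_lt (hProdpos r)))]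
    rw [h1]
    exact inv_mul_cancel₀ (ne_of_gt (hProdpos r))
  set α : Fin k → ℝ := fun r => -(w r.succ) * γ r with hα
  set β : Fin k → ℝ := fun r => M (r:ℕ) * γ r with hβ
  have hβpos : ∀ r, 0 < β r := fun r => mul_pos (hMpos _) (hγpos r)
  set c : Fin k → Fin (k+1) → ℝ := fun r t =>
    if (t:ℕ) ≤ (r:ℕ) then α r else if (t:ℕ) = (r:ℕ)+1 then β r else 0 with hc
  have hcsucc : ∀ r : Fin k, c r r.succ = β r := by
    intro r
    simp only [hc, Fin.val_succ]
    rw [if_neg (by omega)]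
    simp
  have hclow : ∀ (r : Fin k) (t : Fin (k+1)), (t:ℕ) ≤ (r:ℕ) → c r t = α r := by
    intro r t h
    simp only [hc]
    rw [if_pos h]
  -- generic sum splitter
  have sumc : ∀ (r : Fin k) (X : Fin (k+1) → ℝ),
      ∑ t, c r t * X t
        = α r * (∑ t : Fin (k+1), if (t:ℕ) ≤ (r:ℕ) then X t else 0) + β r * X r.succ := by
    intro r X
    have key : ∀ t : Fin (k+1), c r t * X t
        = (if (t:ℕ) ≤ (r:ℕ) then α r * X t else 0) + (if t = r.succ then β r * X t else 0) := by
      intro t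
      have hts : t = r.succ ↔ (t:ℕ) = (r:ℕ)+1 := by
        rw [Fin.ext_iff, Fin.val_succ]
      simp only [hc]
      by_cases h1 : (t:ℕ) ≤ (r:ℕ)
      · rw [if_pos h1, if_pos h1, if_neg (by rw [hts]; omega)]; ring
      · by_cases h2 : (t:ℕ) = (r:ℕ)+1
        · rw [if_neg h1, if_pos h2, if_neg h1, if_pos (hts.mpr h2)]; ring
        · rw [if_neg h1, if_neg h2, if_neg h1, if_neg (by rw [hts]; omega)]; ring
    rw [Finset.sum_congr rfl (fun t _ => key t), Finset.sum_add_distrib,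
      Finset.sum_ite_eq' Finset.univ r.succ (fun t => β r * X t), Finset.mul_sum]
    congr 1
    · exact Finset.sum_congr rfl (fun t _ => by rw [mul_ite, mul_zero])
    · simp
  -- sum of w over initial segment is M
  have hsumw : ∀ r : Fin k, (∑ t : Fin (k+1), if (t:ℕ) ≤ (r:ℕ) then w t else 0) = M (r:ℕ) := by
    intro r; rfl
  have hzero : ∀ r, α r * M (r:ℕ) + β r * w r.succ = 0 := by
    intro r; rw [hα, hβ]; ring
  refine ⟨c, ?_, ?_, ?_, ?_⟩
  · -- constraint
    intro r
    have : ∑ t, w t * c r t = ∑ t, c r t * w t :=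
      Finset.sum_congr rfl fun t _ => mul_comm _ _
    rw [this, sumc r w, hsumw r, hzero r]
  · -- orthonormality
    have ortho0 : ∀ r s : Fin k, (r:ℕ) < (s:ℕ) → ∑ t, w t * c r t * c s t = 0 := by
      intro r s hrs
      have : ∑ t, w t * c r t * c s t = ∑ t, c r t * (w t * c s t) :=
        Finset.sum_congr rfl fun t _ => by ring
      rw [this, sumc r (fun t => w t * c s t)]
      have h1 : (∑ t : Fin (k+1), if (t:ℕ) ≤ (r:ℕ) then w t * c s t else 0)
          = α s * M (r:ℕ) := by
        rw [Finset.mul_sum]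
        apply Finset.sum_congr rfl
        intro t _
        by_cases h : (t:ℕ) ≤ (r:ℕ)
        · rw [if_pos h, if_pos h, hclow s t (by omega)]; ring
        · rw [if_neg h, if_neg h]; ring
      have h2 : c s r.succ = α s := hclow s r.succ (by rw [Fin.val_succ]; omega)
      rw [h1, h2]
      have hz := hzero r
      linear_combination (α s) * hz
    intro r s
    by_cases hrs : r = s
    · subst hrs
      rw [if_pos rfl]
      have : ∑ t, w t * c r t * c r t = ∑ t, c r t * (w t * c r t) :=
        Finset.sum_congr rfl fun t _ => by ring
      rw [this, sumc r (fun t => w t * c r t), hcsucc r]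
      have h1 : (∑ t : Fin (k+1), if (t:ℕ) ≤ (r:ℕ) then w t * c r t else 0)
          = α r * M (r:ℕ) := by
        rw [Finset.mul_sum]
        apply Finset.sum_congr rfl
        intro t _
        by_cases h : (t:ℕ) ≤ (r:ℕ)
        · rw [if_pos h, if_pos h, hclow r t h]; ring
        · rw [if_neg h, if_neg h]; ring
      rw [h1]
      have hs := hγsq r
      rw [hMsucc r] at hs
      simp only [hα, hβ]
      linear_combination hs
    · rw [if_neg hrs]
      rcases Nat.lt_or_ge (r:ℕ) (s:ℕ) with h | h
      · exact ortho0 r s h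
      · have hlt : (s:ℕ) < (r:ℕ) := by
          rcases Nat.lt_or_ge (s:ℕ) (r:ℕ) with h' | h'
          · exact h'
          · exfalso; exact hrs (Fin.ext (by omega))
        have := ortho0 s r hlt
        rw [← this]
        exact Finset.sum_congr rfl fun t _ => by ring
  · -- products
    intro r s hrs t
    have hcs0 : c s 0 = α s := hclow s 0 (by simp)
    rw [hcs0]
    by_cases h1 : (t:ℕ) ≤ (r:ℕ)
    · rw [hclow r t h1, hclow s t (by omega)]; ring
    · by_cases h2 : (t:ℕ) = (r:ℕ)+1
      · rw [hclow s t (by omega)]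
        have : c r t = β r := by
          simp only [hc]; rw [if_neg h1, if_pos h2]
        rw [this]; ring
      · have : c r t = 0 := by
          simp only [hc]; rw [if_neg h1, if_neg h2]
        rw [this]; ring
  · -- completeness
    intro x hconstraint horth
    have hconst : ∀ j : ℕ, ∀ hj : j < k+1, x ⟨j, hj⟩ = x ⟨0, Nat.succ_pos k⟩ := by
      intro j
      induction j using Nat.strong_induction_on with
      | _ j ihj =>
        intro hj
        match j with
        | 0 => rfl
        | (jj+1) =>
          have hjj : jj < k := by omega
          set r : Fin k := ⟨jj, hjj⟩ with hr
          have hrsucc : r.succ = ⟨jj+1, hj⟩ := by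
            apply Fin.ext; simp [hr]
          have hE := horth r
          have : ∑ t, w t * x t * c r t = ∑ t, c r t * (w t * x t) :=
            Finset.sum_congr rfl fun t _ => by ring
          rw [this, sumc r (fun t => w t * x t)] at hE
          have h1 : (∑ t : Fin (k+1), if (t:ℕ) ≤ (r:ℕ) then w t * x t else 0)
              = x ⟨0, Nat.succ_pos k⟩ * M (r:ℕ) := by
            rw [Finset.mul_sum]
            apply Finset.sum_congr rfl
            intro t _
            by_cases h : (t:ℕ) ≤ (r:ℕ)
            · rw [if_pos h, if_pos h]
              have : x t = x ⟨0, Nat.succ_pos k⟩ := by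
                have : x t = x ⟨(t:ℕ), t.isLt⟩ := by congr
                rw [this]
                exact ihj (t:ℕ) (by simp [hr] at h; omega) t.isLt
              rw [this]; ring
            · rw [if_neg h, if_neg h]; ring
          rw [h1] at hE
          -- hE : α r * (x₀ * M r) + β r * (w r.succ * x r.succ) = 0
          have hkey : M (r:ℕ) * γ r * w r.succ * (x r.succ - x ⟨0, Nat.succ_pos k⟩) = 0 := by
            simp only [hα, hβ] at hE
            linear_combination hE
          have hne : M (r:ℕ) * γ r * w r.succ ≠ 0 := by
            have := hMpos (r:ℕ); have := hγpos r; have := hw r.succ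
            positivity
          have := (mul_eq_zero.mp hkey).resolve_left hne
          have hsucc : x r.succ = x ⟨0, Nat.succ_pos k⟩ := by linarith [sub_eq_zero.mp this]
          rw [← hrsucc]
          exact hsucc
    have hsum : ∑ t, w t * x t = x ⟨0, Nat.succ_pos k⟩ * M k := by
      rw [Finset.mul_sum]
      apply Finset.sum_congr rfl
      intro t _
      rw [if_pos (by omega : (t:ℕ) ≤ k)]
      have : x t = x ⟨0, Nat.succ_pos k⟩ := by
        have h : x t = x ⟨(t:ℕ), t.isLt⟩ := by congr
        rw [h]; exact hconst (t:ℕ) t.isLt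
      rw [this]; ring
    rw [hsum] at hconstraint
    have hx0 : x ⟨0, Nat.succ_pos k⟩ = 0 := by
      rcases mul_eq_zero.mp hconstraint with h | h
      · exact h
      · exact absurd h (ne_of_gt (hMpos k))
    funext t
    have h : x t = x ⟨(t:ℕ), t.isLt⟩ := by congr
    rw [h, hconst (t:ℕ) t.isLt, hx0]
    rfl

end SS

namespace SS

lemma sum_enum {ι M : Type*} [Fintype ι] [DecidableEq ι] [AddCommMonoid M] {p : ℕ}
    (A : Finset ι) (e : Fin p → ι)
    (hinj : Function.Injective e) (hmem : ∀ r, e r ∈ A) (hsurj : ∀ t ∈ A, ∃ r, e r = t)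
    (h : ι → M) (hzero : ∀ t, t ∉ A → h t = 0) : ∑ t, h t = ∑ r, h (e r) := by
  have himg : Finset.image e Finset.univ = A := by
    ext t
    simp only [Finset.mem_image, Finset.mem_univ, true_and]
    constructor
    · rintro ⟨r, rfl⟩; exact hmem r
    · intro ht; exact hsurj t ht
  rw [← Finset.sum_subset (Finset.subset_univ A) (fun t _ ht => hzero t ht), ← himg,
    Finset.sum_image (fun r _ s _ hes => hinj hes)]

lemma exists_enum {m : ℕ} (A : Finset (Fin m)) (p : ℕ) (hk : A.card = p) :
    ∃ e : Fin p → Fin m, Function.Injective e ∧ (∀ r, e r ∈ A) ∧ ∀ t ∈ A, ∃ r, e r = t := by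
  refine ⟨fun r => (A.equivFin.symm (Fin.cast hk.symm r) : Fin m), ?_, ?_, ?_⟩
  · intro r s h
    have h1 : A.equivFin.symm (Fin.cast hk.symm r) = A.equivFin.symm (Fin.cast hk.symm s) :=
      Subtype.coe_injective h
    have h2 := A.equivFin.symm.injective h1
    have := congrArg (Fin.cast hk) h2
    simpa [Fin.ext_iff] using this
  · intro r; exact (A.equivFin.symm (Fin.cast hk.symm r)).2
  · intro t ht
    refine ⟨Fin.cast hk (A.equivFin ⟨t, ht⟩), ?_⟩
    show ((A.equivFin.symm (Fin.cast hk.symm (Fin.cast hk (A.equivFin ⟨t, ht⟩)))) : Fin m) = t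
    have h1 : Fin.cast hk.symm (Fin.cast hk (A.equivFin ⟨t, ht⟩)) = A.equivFin ⟨t, ht⟩ := by
      apply Fin.ext; simp
    rw [h1, Equiv.symm_apply_apply]

end SS

namespace SS
variable {n : ℕ}

def Concl (n : ℕ) (V : Submodule ℝ (Fin n → ℝ)) : Prop :=
  ∃ (k : ℕ) (u : Fin k → (Fin n → ℝ)),
    (∀ i, u i ∈ V) ∧
    Submodule.span ℝ (Set.range u) = V ∧
    (∀ i j, (∑ l, u i l * u j l) = if i = j then (1:ℝ) else 0) ∧
    (∀ i j, i ≠ j → (∃ c : ℝ, u i * u j = c • u i) ∨ (∃ c : ℝ, u i * u j = c • u j))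

lemma case_dim0 (V : Submodule ℝ (Fin n → ℝ)) (h : ∀ v ∈ V, v = (0 : Fin n → ℝ)) :
    Concl n V := by
  refine ⟨0, Fin.elim0, fun i => i.elim0, ?_, fun i => i.elim0, fun i => i.elim0⟩
  have h1 : Set.range (Fin.elim0 : Fin 0 → Fin n → ℝ) = ∅ := Set.range_eq_empty _
  rw [h1, Submodule.span_empty]
  symm
  rw [Submodule.eq_bot_iff]
  exact h

lemma case_dim1 (V : Submodule ℝ (Fin n → ℝ)) (b₀ : Fin n → ℝ) (hb₀V : b₀ ∈ V)
    (hb₀ : b₀ ≠ 0) (h : ∀ x ∈ V, ∃ c : ℝ, x = c • b₀) : Concl n V := by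
  set τ := Real.sqrt (dot b₀ b₀) with hτdef
  have hτsq : τ ^ 2 = dot b₀ b₀ := Real.sq_sqrt (dot_self_nonneg b₀)
  have hτpos : 0 < τ := Real.sqrt_pos.mpr (dot_self_pos hb₀)
  set u₀ : Fin n → ℝ := τ⁻¹ • b₀ with hu₀def
  have hu₀V : u₀ ∈ V := V.smul_mem _ hb₀V
  have hu₀ : dot u₀ u₀ = 1 := by
    rw [hu₀def, dot_smul_left, dot_smul_right, ← hτsq]
    field_simp
  refine ⟨1, fun _ => u₀, fun _ => hu₀V, ?_, ?_, ?_⟩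
  · have h1 : Set.range (fun _ : Fin 1 => u₀) = {u₀} := Set.range_const
    rw [h1]
    apply le_antisymm
    · rw [Submodule.span_singleton_le_iff_mem]; exact hu₀V
    · intro x hxV
      obtain ⟨c, rfl⟩ := h x hxV
      rw [Submodule.mem_span_singleton]
      exact ⟨c * τ, by rw [hu₀def, smul_smul, mul_assoc, mul_inv_cancel₀ (ne_of_gt hτpos), mul_one]⟩
  · intro i j
    have : i = j := Subsingleton.elim i j
    rw [if_pos this]
    exact hu₀
  · intro i j hij
    exact absurd (Subsingleton.elim i j) hij

end SS

namespace SS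
variable {n : ℕ}

lemma smul_mul_smul' (x y : ℝ) (f h : Fin n → ℝ) : (x • f) * (y • h) = (x * y) • (f * h) := by
  funext i
  simp only [Pi.mul_apply, Pi.smul_apply, smul_eq_mul]
  ring

lemma main_case (V : Submodule ℝ (Fin n → ℝ))
    (hV : ∀ a ∈ V, ∀ b ∈ V, dot a b = 0 → a * b ∈ V)
    (b₀ : Fin n → ℝ) (hb₀V : b₀ ∈ V) (hb₀ : b₀ ≠ 0)
    (x₀ : Fin n → ℝ) (hx₀V : x₀ ∈ V) (hx₀ : ∀ c : ℝ, x₀ ≠ c • b₀) : Concl n V := by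
  classical
  -- every element of V has a nonzero orthogonal partner in V
  have haux : ∀ y ∈ V, ∃ a, a ∈ V ∧ a ≠ 0 ∧ dot a y = 0 := by
    intro y hyV
    by_cases hy0 : y = 0
    · exact ⟨b₀, hb₀V, hb₀, by rw [hy0, dot_zero_right]⟩
    · have hyy : dot y y ≠ 0 := ne_of_gt (dot_self_pos hy0)
      have hex : ∃ x, x ∈ V ∧ ∀ c : ℝ, x ≠ c • y := by
        by_contra hcon
        push_neg at hcon
        obtain ⟨cb, hcb⟩ := hcon b₀ hb₀V
        obtain ⟨cx, hcx⟩ := hcon x₀ hx₀V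
        have hcb0 : cb ≠ 0 := by intro h; rw [h, zero_smul] at hcb; exact hb₀ hcb
        apply hx₀ (cx / cb)
        rw [hcx, hcb, smul_smul]
        congr 1
        field_simp
      obtain ⟨x, hxV, hxy⟩ := hex
      set a := x - (dot x y / dot y y) • y with ha
      have haV : a ∈ V := V.sub_mem hxV (V.smul_mem _ hyV)
      have hay : dot a y = 0 := by
        rw [ha, dot_sub_left, dot_smul_left]
        field_simp
        ring
      have ha0 : a ≠ 0 := by
        intro h
        rw [ha] at h
        exact hxy (dot x y / dot y y) (sub_eq_zero.mp h)
      exact ⟨a, haV, ha0, hay⟩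
  -- unit vector in V
  set τ := Real.sqrt (dot b₀ b₀) with hτdef
  have hτsq : τ ^ 2 = dot b₀ b₀ := Real.sq_sqrt (dot_self_nonneg b₀)
  have hτpos : 0 < τ := Real.sqrt_pos.mpr (dot_self_pos hb₀)
  set u₀ : Fin n → ℝ := τ⁻¹ • b₀ with hu₀def
  have hu₀V : u₀ ∈ V := V.smul_mem _ hb₀V
  have hu₀ : dot u₀ u₀ = 1 := by
    rw [hu₀def, dot_smul_left, dot_smul_right, ← hτsq]
    field_simp
  obtain ⟨d, hdperp, hB⟩ := exists_d V hV hu₀V hu₀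
  set W := V ⊔ Submodule.span ℝ {d} with hWdef
  have hWmul : ∀ x ∈ W, ∀ y ∈ W, x * y ∈ W :=
    W_closed V hV d hdperp hB haux hu₀V hu₀
  obtain ⟨m, g, hgW, hg01, hg0, hgdisj, hgspan⟩ := indicator_basis W hWmul
  have hVleW : V ≤ W := le_sup_left
  have hgidem : ∀ t, g t * g t = g t := by
    intro t
    funext i
    rcases hg01 t i with h | h <;> rw [Pi.mul_apply, h] <;> ring
  have hgorth : ∀ t s, t ≠ s → dot (g t) (g s) = 0 := by
    intro t s hts
    have h0 : ∀ i, g t i * g s i = 0 := by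
      intro i
      have := congrFun (hgdisj t s hts) i
      simpa [Pi.mul_apply] using this
    unfold dot
    rw [Finset.sum_congr rfl (fun i _ => h0 i), Finset.sum_const_zero]
  set wt : Fin m → ℝ := fun t => dot (g t) (g t) with hwt
  have hwpos : ∀ t, 0 < wt t := fun t => dot_self_pos (hg0 t)
  have hVchar : ∀ x ∈ W, dot d x = 0 → x ∈ V := by
    intro x hx hdx
    rw [hWdef, Submodule.mem_sup] at hx
    obtain ⟨v, hv, z, hz, rfl⟩ := hx
    rw [Submodule.mem_span_singleton] at hz
    obtain ⟨t, rfl⟩ := hz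
    rw [dot_add_right, hdperp v hv, dot_smul_right, zero_add] at hdx
    by_cases hd0 : d = 0
    · rw [hd0, smul_zero, add_zero]; exact hv
    · rcases mul_eq_zero.mp hdx with h | h
      · rw [h, zero_smul, add_zero]; exact hv
      · exact absurd (dot_self_eq_zero h) hd0
  have hrep : ∀ x ∈ W, ∃ cf : Fin m → ℝ,
      (∑ t, cf t • g t = x) ∧ ∀ s, dot x (g s) = cf s * wt s := by
    intro x hx
    rw [← hgspan] at hx
    obtain ⟨cf, hcf⟩ := (Submodule.mem_span_range_iff_exists_fun ℝ).mp hx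
    refine ⟨cf, hcf, ?_⟩
    intro s
    rw [← hcf, dot_sum_left, Finset.sum_eq_single s]
    · rw [dot_smul_left]
    · intro t _ hts
      rw [dot_smul_left, hgorth t s hts, mul_zero]
    · intro h; exact absurd (Finset.mem_univ s) h
  set act : Fin m → Prop := fun t => ∃ v ∈ V, dot v (g t) ≠ 0 with hact
  set A : Finset (Fin m) := Finset.univ.filter (fun t => act t) with hA
  have hactA : ∀ t, t ∈ A ↔ act t := by
    intro t; rw [hA, Finset.mem_filter]; simp
  have hinact : ∀ t, t ∉ A → ∀ v ∈ V, dot v (g t) = 0 := by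
    intro t ht v hvV
    by_contra hne
    exact ht ((hactA t).mpr ⟨v, hvV, hne⟩)
  -- zero coefficients off A for elements of V
  have hcfzeroV : ∀ v ∈ V, ∀ cf : Fin m → ℝ, (∀ s, dot v (g s) = cf s * wt s) →
      ∀ t, t ∉ A → cf t • g t = 0 := by
    intro v hvV cf hcf t ht
    have h1 : dot v (g t) = 0 := hinact t ht v hvV
    rw [hcf t] at h1
    rcases mul_eq_zero.mp h1 with h | h
    · rw [h, zero_smul]
    · exact absurd h (ne_of_gt (hwpos t))
  by_cases hall : ∀ t ∈ A, dot d (g t) = 0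
  · -- Case H0: V is spanned by the active indicators
    have hgVA : ∀ t ∈ A, g t ∈ V := fun t ht => hVchar (g t) (hgW t) (hall t ht)
    obtain ⟨e, heinj, hemem, hesurj⟩ := exists_enum A A.card rfl
    set u : Fin A.card → Fin n → ℝ := fun r => (Real.sqrt (wt (e r)))⁻¹ • g (e r) with hu
    have hmemu : ∀ r, u r ∈ V := fun r => V.smul_mem _ (hgVA (e r) (hemem r))
    refine ⟨A.card, u, hmemu, ?_, ?_, ?_⟩
    · apply le_antisymm
      · rw [Submodule.span_le]
        rintro x ⟨r, rfl⟩
        exact hmemu r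
      · intro v hvV
        obtain ⟨cf, hcfsum, hcfdot⟩ := hrep v (hVleW hvV)
        have hzero := hcfzeroV v hvV cf hcfdot
        have hvsum : v = ∑ r, cf (e r) • g (e r) := by
          rw [← hcfsum, sum_enum A e heinj hemem hesurj _ hzero]
        rw [hvsum]
        apply Submodule.sum_mem
        intro r _
        have hsne : Real.sqrt (wt (e r)) ≠ 0 := ne_of_gt (Real.sqrt_pos.mpr (hwpos (e r)))
        have : cf (e r) • g (e r)
            = (cf (e r) * Real.sqrt (wt (e r))) • ((Real.sqrt (wt (e r)))⁻¹ • g (e r)) := by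
          rw [smul_smul, mul_assoc, mul_inv_cancel₀ hsne, mul_one]
        rw [this]
        exact Submodule.smul_mem _ _ (Submodule.subset_span ⟨r, rfl⟩)
    · intro i j
      show dot (u i) (u j) = _
      by_cases hij : i = j
      · subst hij
        rw [if_pos rfl, hu]
        rw [dot_smul_left, dot_smul_right]
        have hs : Real.sqrt (wt (e i)) * Real.sqrt (wt (e i)) = wt (e i) :=
          Real.mul_self_sqrt (le_of_lt (hwpos (e i)))
        have hsne : Real.sqrt (wt (e i)) ≠ 0 := ne_of_gt (Real.sqrt_pos.mpr (hwpos (e i)))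
        have : dot (g (e i)) (g (e i)) = wt (e i) := rfl
        rw [this, ← hs]
        field_simp
        rw [Real.sqrt_sq (Real.sqrt_nonneg _)]
      · rw [if_neg hij, hu]
        rw [dot_smul_left, dot_smul_right, hgorth (e i) (e j) (fun h => hij (heinj h))]
        ring
    · intro i j hij
      left
      refine ⟨0, ?_⟩
      rw [zero_smul, hu]
      rw [smul_mul_smul', hgdisj (e i) (e j) (fun h => hij (heinj h)), smul_zero]
  · -- Case H1: Helmert basis
    push_neg at hall
    obtain ⟨t₁, ht₁A, ht₁d⟩ := hall
    have hd0 : d ≠ 0 := by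
      intro h
      apply ht₁d
      rw [h, dot_zero_left]
    set lam := dot d (g t₁) / wt t₁ with hlamdef
    have hlam0 : lam ≠ 0 := div_ne_zero ht₁d (ne_of_gt (hwpos t₁))
    have hscal : ∀ v ∈ V, ∀ cv : ℝ, v * d = cv • v →
        ∀ s, dot v (g s) ≠ 0 → dot d (g s) = cv * wt s := by
      intro v hvV cv hcv s hvs
      obtain ⟨cf, hcfsum, hcfdot⟩ := hrep v (hVleW hvV)
      have hcfne : cf s ≠ 0 := by
        intro h
        apply hvs
        rw [hcfdot s, h, zero_mul]
      have hvg : v * g s = cf s • g s := by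
        rw [← hcfsum, Finset.sum_mul, Finset.sum_eq_single s]
        · rw [smul_mul_assoc, hgidem]
        · intro t _ hts
          rw [smul_mul_assoc, hgdisj t s hts, smul_zero]
        · intro h; exact absurd (Finset.mem_univ s) h
      have h1 : dot (d * v) (g s) = dot d (v * g s) := dot_mul_assoc d v (g s)
      have h2 : d * v = cv • v := by rw [mul_comm]; exact hcv
      rw [h2, hvg, dot_smul_left, dot_smul_right] at h1
      have h3 : cf s * dot d (g s) = cf s * (cv * wt s) := by
        linear_combination (-1 : ℝ) * h1 + cv * hcfdot s
      exact mul_left_cancel₀ hcfne h3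
    have hcvlam : ∀ v ∈ V, ∀ cv : ℝ, v * d = cv • v → dot v (g t₁) ≠ 0 → cv = lam := by
      intro v hvV cv hcv hvt₁
      have := hscal v hvV cv hcv t₁ hvt₁
      rw [hlamdef, this, mul_div_assoc, div_self (ne_of_gt (hwpos t₁)), mul_one]
    have hunif : ∀ t ∈ A, dot d (g t) = lam * wt t := by
      intro t htA
      obtain ⟨v, hvV, hvt⟩ := (hactA t).mp htA
      obtain ⟨v₁, hv₁V, hv₁t₁⟩ := (hactA t₁).mp ht₁A
      by_cases h1 : dot v (g t₁) ≠ 0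
      · obtain ⟨cv, hcv⟩ := d_mul_smul V hV d hdperp hB haux hd0 v hvV
        have hcveq := hcvlam v hvV cv hcv h1
        have := hscal v hvV cv hcv t hvt
        rw [hcveq] at this
        exact this
      · push_neg at h1
        by_cases h2 : dot v₁ (g t) ≠ 0
        · obtain ⟨cv1, hcv1⟩ := d_mul_smul V hV d hdperp hB haux hd0 v₁ hv₁V
          have hcveq := hcvlam v₁ hv₁V cv1 hcv1 hv₁t₁
          have := hscal v₁ hv₁V cv1 hcv1 t h2
          rw [hcveq] at this
          exact this
        · push_neg at h2
          have hv2V : v + v₁ ∈ V := V.add_mem hvV hv₁V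
          obtain ⟨cv2, hcv2⟩ := d_mul_smul V hV d hdperp hB haux hd0 (v + v₁) hv2V
          have e1 : dot (v + v₁) (g t₁) ≠ 0 := by
            rw [dot_add_left, h1, zero_add]; exact hv₁t₁
          have e2 : dot (v + v₁) (g t) ≠ 0 := by
            rw [dot_add_left, h2, add_zero]; exact hvt
          have hcveq := hcvlam (v + v₁) hv2V cv2 hcv2 e1
          have := hscal (v + v₁) hv2V cv2 hcv2 t e2
          rw [hcveq] at this
          exact this
    have hApos : 0 < A.card := Finset.card_pos.mpr ⟨t₁, ht₁A⟩
    obtain ⟨k, hk⟩ : ∃ k, A.card = k + 1 := ⟨A.card - 1, by omega⟩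
    obtain ⟨e, heinj, hemem, hesurj⟩ := exists_enum A (k+1) hk
    set w' : Fin (k+1) → ℝ := fun r => wt (e r) with hw'
    have hw'pos : ∀ r, 0 < w' r := fun r => hwpos (e r)
    obtain ⟨c, hc1, hc2, hc3, hc4⟩ := helmert k w' hw'pos
    set u : Fin k → Fin n → ℝ := fun r => ∑ t, c r t • g (e t) with hu
    have hliftdotg : ∀ (a : Fin (k+1) → ℝ) (s : Fin (k+1)),
        dot (∑ t, a t • g (e t)) (g (e s)) = a s * w' s := by
      intro a s
      rw [dot_sum_left, Finset.sum_eq_single s]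
      · rw [dot_smul_left]
      · intro t _ hts
        rw [dot_smul_left, hgorth (e t) (e s) (fun h => hts (heinj h)), mul_zero]
      · intro h; exact absurd (Finset.mem_univ s) h
    have hliftdot : ∀ a b : Fin (k+1) → ℝ,
        dot (∑ t, a t • g (e t)) (∑ t, b t • g (e t)) = ∑ t, w' t * (a t * b t) := by
      intro a b
      rw [dot_comm, dot_sum_left]
      apply Finset.sum_congr rfl
      intro s _
      rw [dot_smul_left, dot_comm, hliftdotg a s]
      ring
    have hliftW : ∀ a : Fin (k+1) → ℝ, (∑ t, a t • g (e t)) ∈ W :=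
      fun a => Submodule.sum_mem _ fun t _ => Submodule.smul_mem _ _ (hgW (e t))
    have hliftdotd : ∀ a : Fin (k+1) → ℝ,
        dot d (∑ t, a t • g (e t)) = lam * ∑ t, w' t * a t := by
      intro a
      rw [dot_comm, dot_sum_left, Finset.mul_sum]
      apply Finset.sum_congr rfl
      intro t _
      rw [dot_smul_left, dot_comm, hunif (e t) (hemem t)]
      ring
    have hliftV : ∀ a : Fin (k+1) → ℝ, (∑ t, w' t * a t = 0) → (∑ t, a t • g (e t)) ∈ V := by
      intro a ha
      apply hVchar _ (hliftW a)
      rw [hliftdotd a, ha, mul_zero]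
    have hliftmul : ∀ a b : Fin (k+1) → ℝ,
        (∑ t, a t • g (e t)) * (∑ t, b t • g (e t)) = ∑ t, (a t * b t) • g (e t) := by
      intro a b
      rw [Finset.sum_mul_sum]
      apply Finset.sum_congr rfl
      intro t _
      rw [Finset.sum_eq_single t]
      · rw [smul_mul_smul', hgidem]
      · intro s _ hst
        rw [smul_mul_smul', hgdisj (e t) (e s) (fun h => hst (heinj h).symm), smul_zero]
      · intro h; exact absurd (Finset.mem_univ t) h
    have hmemu : ∀ r, u r ∈ V := fun r => hliftV (c r) (hc1 r)
    have hortho : ∀ i j, dot (u i) (u j) = if i = j then 1 else 0 := by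
      intro i j
      rw [hu]
      rw [hliftdot (c i) (c j), ← hc2 i j]
      apply Finset.sum_congr rfl
      intro t _
      ring
    refine ⟨k, u, hmemu, ?_, ?_, ?_⟩
    · apply le_antisymm
      · rw [Submodule.span_le]
        rintro x ⟨r, rfl⟩
        exact hmemu r
      · intro v hvV
        set y := v - ∑ r, (dot v (u r)) • u r with hy
        have hyV : y ∈ V :=
          V.sub_mem hvV (Submodule.sum_mem _ fun r _ => Submodule.smul_mem _ _ (hmemu r))
        have hyorth : ∀ r, dot y (u r) = 0 := by
          intro r
          rw [hy, dot_sub_left, dot_sum_left]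
          have : ∀ s : Fin k, dot (dot v (u s) • u s) (u r)
              = if s = r then dot v (u s) else 0 := by
            intro s
            rw [dot_smul_left, hortho s r]
            by_cases h : s = r
            · rw [if_pos h, if_pos h, mul_one]
            · rw [if_neg h, if_neg h, mul_zero]
          rw [Finset.sum_congr rfl (fun s _ => this s),
            Finset.sum_ite_eq' Finset.univ r (fun s => dot v (u s))]
          simp
        obtain ⟨cf, hcfsum, hcfdot⟩ := hrep y (hVleW hyV)
        have hzero := hcfzeroV y hyV cf hcfdot
        have hysum : y = ∑ r, cf (e r) • g (e r) := by
          rw [← hcfsum, sum_enum A e heinj hemem hesurj _ hzero]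
        set a : Fin (k+1) → ℝ := fun r => cf (e r) with haa
        have ha1 : ∑ t, w' t * a t = 0 := by
          have hdy : dot d y = 0 := hdperp y hyV
          rw [hysum, hliftdotd a] at hdy
          rcases mul_eq_zero.mp hdy with h | h
          · exact absurd h hlam0
          · exact h
        have ha2 : ∀ r, ∑ t, w' t * a t * c r t = 0 := by
          intro r
          have h0 : dot y (u r) = 0 := hyorth r
          rw [hysum] at h0
          rw [hu] at h0
          rw [hliftdot a (c r)] at h0
          rw [← h0]
          apply Finset.sum_congr rfl
          intro t _
          ring
        have ha0 := hc4 a ha1 ha2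
        have hyzero : y = 0 := by
          rw [hysum]
          apply Finset.sum_eq_zero
          intro r _
          have : cf (e r) = 0 := congrFun ha0 r
          rw [this, zero_smul]
        have hveq : v = ∑ r, (dot v (u r)) • u r := by
          have := sub_eq_zero.mp (hy ▸ hyzero)
          exact this
        rw [hveq]
        exact Submodule.sum_mem _ fun r _ =>
          Submodule.smul_mem _ _ (Submodule.subset_span ⟨r, rfl⟩)
    · intro i j
      show dot (u i) (u j) = _
      exact hortho i j
    · intro i j hij
      rcases Nat.lt_or_ge (i : ℕ) (j : ℕ) with h | h
      · left
        refine ⟨c j 0, ?_⟩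
        rw [hu]
        rw [hliftmul (c i) (c j), Finset.smul_sum]
        apply Finset.sum_congr rfl
        intro t _
        rw [hc3 i j h t, smul_smul]
      · have hji : (j : ℕ) < (i : ℕ) := by
          have : (i : ℕ) ≠ (j : ℕ) := fun hh => hij (Fin.ext hh)
          omega
        right
        refine ⟨c i 0, ?_⟩
        rw [mul_comm, hu]
        rw [hliftmul (c j) (c i), Finset.smul_sum]
        apply Finset.sum_congr rfl
        intro t _
        rw [hc3 j i hji t, smul_smul]

end SS

/-- Lemma 4.1 (selfsatur2): a self-saturated subspace of ℝⁿ admits an orthonormal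
basis `u` such that `u i ⋄ u j ∈ ℝ u i ∪ ℝ u j` for `i ≠ j`. -/
theorem stmt_0 (n : ℕ) (V : Submodule ℝ (Fin n → ℝ))
    (hV : ∀ a ∈ V, ∀ b ∈ V, (∑ k, a k * b k) = 0 → a * b ∈ V) :
    ∃ (k : ℕ) (u : Fin k → (Fin n → ℝ)),
      (∀ i, u i ∈ V) ∧
      Submodule.span ℝ (Set.range u) = V ∧
      (∀ i j, (∑ l, u i l * u j l) = if i = j then (1:ℝ) else 0) ∧
      (∀ i j, i ≠ j → (∃ c : ℝ, u i * u j = c • u i) ∨ (∃ c : ℝ, u i * u j = c • u j)) := by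
  classical
  have hV' : ∀ a ∈ V, ∀ b ∈ V, SS.dot a b = 0 → a * b ∈ V := hV
  by_cases h0 : ∀ v ∈ V, v = (0 : Fin n → ℝ)
  · exact SS.case_dim0 V h0
  · push_neg at h0
    obtain ⟨b₀, hb₀V, hb₀⟩ := h0
    by_cases h1 : ∀ x ∈ V, ∃ c : ℝ, x = c • b₀
    · exact SS.case_dim1 V b₀ hb₀V hb₀ h1
    · push_neg at h1
      obtain ⟨x₀, hx₀V, hx₀⟩ := h1
      exact SS.main_case V hV' b₀ hb₀V hb₀ x₀ hx₀V hx₀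
end

section
/- Let $U \subseteq \mathbb{R}^n$ be a linear subspace closed under the componentwise product $\diamond$, containing the all-ones vector, and suppose $U \neq \mathbb{R}\cdot(1,\dots,1)$. Let $\alpha \in U$ be a nonzero vector with the maximal number of zero entries among nonzero vectors of $U$. Then for every $\beta \in U$ and all indices $i, j$ with $\alpha_i \neq 0$ and $\alpha_j \neq 0$, one has $\beta_i = \beta_j$. -/
/-- Key step in Lemma 2.5: if `U` is closed under `⋄`, contains the all-ones vector, and
`U ≠ ℝ·(1,…,1)`, and `α ∈ U` is a nonzero vector with a maximal number of zero entries,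
then every `β ∈ U` is constant on the support of `α`. -/
theorem stmt_2 (n : ℕ) (U : Submodule ℝ (Fin n → ℝ))
    (h1 : (fun _ => (1:ℝ)) ∈ U)
    (hmul : ∀ a ∈ U, ∀ b ∈ U, a * b ∈ U)
    (hne : U ≠ Submodule.span ℝ {fun _ : Fin n => (1:ℝ)})
    (α : Fin n → ℝ) (hαU : α ∈ U) (hα0 : α ≠ 0)
    (hmax : ∀ β ∈ U, β ≠ (0 : Fin n → ℝ) →
      (Finset.univ.filter fun i => β i = 0).card ≤ (Finset.univ.filter fun i => α i = 0).card) :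
    ∀ β ∈ U, ∀ i j : Fin n, α i ≠ 0 → α j ≠ 0 → β i = β j := by
  intro β hβ i j hi hj
  by_contra hneq
  set γ : Fin n → ℝ := α * (β - (β j) • (fun _ => (1:ℝ))) with hγ
  have hγU : γ ∈ U := hmul α hαU _ (U.sub_mem hβ (U.smul_mem _ h1))
  have hγi : γ i ≠ 0 := by
    have : γ i = α i * (β i - β j) := by simp [hγ]
    rw [this]
    exact mul_ne_zero hi (sub_ne_zero.mpr hneq)
  have hγj : γ j = 0 := by simp [hγ]
  have hsub : ∀ k, α k = 0 → γ k = 0 := by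
    intro k hk
    simp [hγ, hk]
  have hγ0 : γ ≠ 0 := fun h => hγi (by simp [h])
  have hcard := hmax γ hγU hγ0
  have hA : insert j (Finset.univ.filter fun k => α k = 0) ⊆
      Finset.univ.filter fun k => γ k = 0 := by
    intro k hk
    simp only [Finset.mem_insert, Finset.mem_filter, Finset.mem_univ, true_and] at hk ⊢
    rcases hk with rfl | hk
    · exact hγj
    · exact hsub k hk
  have hle := Finset.card_le_card hA
  rw [Finset.card_insert_of_notMem (by simp [hj])] at hle
  omega
end

section
/- Let $\alpha_1, \dots, \alpha_m$ be nonzero real numbers, let $T$ be an $(m-1) \times m$ real matrix of rank $m-1$ whose rows $t^j$ satisfy $\sum_{i=1}^m \alpha_i t_i^j = 0$. Then the symmetric matrix $T \operatorname{diag}(\alpha_1,\dots,\alpha_m) T^t$ is positive definite if and only if either all $\alpha_i > 0$, or exactly one $\alpha_j < 0$ and $\sum_{i=1}^m \alpha_i < 0$. -/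
open Matrix

private lemma key_pos {n : ℕ} (α : Fin (n+1) → ℝ) (hα : ∀ i, α i ≠ 0)
    (hcond : (∀ i, 0 < α i) ∨
        ((∃ j, α j < 0 ∧ ∀ i, i ≠ j → 0 < α i) ∧ (∑ i, α i) < 0))
    (v : Fin (n+1) → ℝ) (hv : ∑ i, α i * v i = 0) (hv0 : v ≠ 0) :
    0 < ∑ i, α i * v i ^ 2 := by
  obtain ⟨i0, hi0⟩ := Function.ne_iff.mp hv0
  rcases hcond with hpos | ⟨⟨j, hj, hjpos⟩, hsum⟩
  · apply Finset.sum_pos' (fun i _ => by have := hpos i; positivity)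
    refine ⟨i0, Finset.mem_univ _, ?_⟩
    have h1 := hpos i0
    have h2 : v i0 ≠ 0 := by simpa using hi0
    positivity
  · set S := ∑ i ∈ {j}ᶜ, α i with hS
    set Q := ∑ i ∈ {j}ᶜ, α i * v i ^ 2 with hQdef
    set P := ∑ i ∈ {j}ᶜ, α i * v i with hPdef
    have hsplit1 : α j * v j + P = 0 := by
      rw [← hv, Fintype.sum_eq_add_sum_compl j]
    have hsplit2 : (∑ i, α i * v i ^ 2) = α j * v j ^ 2 + Q :=
      Fintype.sum_eq_add_sum_compl j _
    have hsumS : α j + S < 0 := by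
      rwa [Fintype.sum_eq_add_sum_compl j] at hsum
    have hmem : ∀ i ∈ ({j}ᶜ : Finset (Fin (n+1))), 0 < α i := by
      intro i hi
      exact hjpos i (by simpa using hi)
    have hQnn : 0 ≤ Q := Finset.sum_nonneg fun i hi => by
      have := hmem i hi; positivity
    have hCS : P ^ 2 ≤ S * Q := by
      have h := Finset.sum_mul_sq_le_sq_mul_sq ({j}ᶜ) (fun i => Real.sqrt (α i))
        (fun i => Real.sqrt (α i) * v i)
      have e1 : ∑ i ∈ ({j}ᶜ : Finset (Fin (n+1))),
          Real.sqrt (α i) * (Real.sqrt (α i) * v i) = P := by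
        apply Finset.sum_congr rfl
        intro i hi
        rw [← mul_assoc, Real.mul_self_sqrt (hmem i hi).le]
      have e2 : ∑ i ∈ ({j}ᶜ : Finset (Fin (n+1))), Real.sqrt (α i) ^ 2 = S := by
        apply Finset.sum_congr rfl
        intro i hi
        rw [Real.sq_sqrt (hmem i hi).le]
      have e3 : ∑ i ∈ ({j}ᶜ : Finset (Fin (n+1))),
          (Real.sqrt (α i) * v i) ^ 2 = Q := by
        apply Finset.sum_congr rfl
        intro i hi
        rw [mul_pow, Real.sq_sqrt (hmem i hi).le]
      rwa [e1, e2, e3] at h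
    rcases eq_or_lt_of_le hQnn with hQ0 | hQpos
    · exfalso
      have hvz : ∀ i ∈ ({j}ᶜ : Finset (Fin (n+1))), α i * v i ^ 2 = 0 :=
        (Finset.sum_eq_zero_iff_of_nonneg fun i hi => by
          have := hmem i hi; positivity).mp hQ0.symm
      have hvz' : ∀ i, i ≠ j → v i = 0 := by
        intro i hi
        have h1 := hvz i (by simpa using hi)
        have h2 := hmem i (by simpa using hi)
        have : v i ^ 2 = 0 := by
          rcases mul_eq_zero.mp h1 with h | h
          · exact absurd h (ne_of_gt h2)
          · exact h
        exact pow_eq_zero_iff (by norm_num) |>.mp this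
      have hP0 : P = 0 := Finset.sum_eq_zero fun i hi => by
        rw [hvz' i (by simpa using hi), mul_zero]
      have hvj : v j = 0 := by
        rw [hP0, add_zero] at hsplit1
        rcases mul_eq_zero.mp hsplit1 with h | h
        · exact absurd h (hα j)
        · exact h
      apply hi0
      by_cases h : i0 = j
      · rw [h, hvj]; rfl
      · rw [hvz' i0 h]; rfl
    · rw [hsplit2]
      have hP : P = -(α j * v j) := by linarith
      have h1 : α j ^ 2 * v j ^ 2 ≤ S * Q := by
        have hps : P ^ 2 = α j ^ 2 * v j ^ 2 := by rw [hP]; ring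
        linarith [hCS]
      have h2 : S * Q < (-α j) * Q := mul_lt_mul_of_pos_right (by linarith) hQpos
      nlinarith [h1, h2, hj, hQpos, sq_nonneg (v j)]

private lemma key_neg {n : ℕ} (α : Fin (n+1) → ℝ) (hα : ∀ i, α i ≠ 0)
    (hcond : ¬ ((∀ i, 0 < α i) ∨
        ((∃ j, α j < 0 ∧ ∀ i, i ≠ j → 0 < α i) ∧ (∑ i, α i) < 0))) :
    ∃ v : Fin (n+1) → ℝ, v ≠ 0 ∧ (∑ i, α i * v i) = 0 ∧ (∑ i, α i * v i ^ 2) ≤ 0 := by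
  classical
  push_neg at hcond
  obtain ⟨h1, h2⟩ := hcond
  obtain ⟨j, hj⟩ := h1
  have hjneg : α j < 0 := lt_of_le_of_ne hj (hα j)
  by_cases htwo : ∃ k, k ≠ j ∧ α k < 0
  · obtain ⟨k, hkj, hk⟩ := htwo
    refine ⟨fun i => if i = j then 1 else if i = k then -(α j)/(α k) else 0, ?_, ?_, ?_⟩
    · intro h
      have := congrFun h j
      simp at this
    · have hterm1 : α k * (-(α j)/(α k)) = -(α j) := by
        field_simp
        rw [mul_div_cancel_left₀ _ (hα k)]
      rw [Fintype.sum_eq_add_sum_compl j]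
      simp only [eq_self_iff_true, if_true, mul_one]
      have : ∑ i ∈ ({j}ᶜ : Finset (Fin (n+1))),
          α i * (if i = j then 1 else if i = k then -(α j)/(α k) else 0)
          = ∑ i ∈ ({j}ᶜ : Finset (Fin (n+1))), (if i = k then α i * (-(α j)/(α k)) else 0) := by
        apply Finset.sum_congr rfl
        intro i hi
        have hij : i ≠ j := by simpa using hi
        rw [if_neg hij]
        split <;> simp
      rw [this, Finset.sum_ite_eq' ({j}ᶜ) k (fun i => α i * (-(α j)/(α k))),
        if_pos (Finset.mem_compl.mpr (by simpa using hkj)), hterm1]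
      ring
    · have hterm2 : α k * (-(α j)/(α k)) ^ 2 = α j ^ 2 / α k := by
        field_simp [hα k]
      rw [Fintype.sum_eq_add_sum_compl j]
      simp only [eq_self_iff_true, if_true, one_pow, mul_one]
      have : ∑ i ∈ ({j}ᶜ : Finset (Fin (n+1))),
          α i * (if i = j then 1 else if i = k then -(α j)/(α k) else 0) ^ 2
          = ∑ i ∈ ({j}ᶜ : Finset (Fin (n+1))), (if i = k then α i * (-(α j)/(α k)) ^ 2 else 0) := by
        apply Finset.sum_congr rfl
        intro i hi
        have hij : i ≠ j := by simpa using hi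
        rw [if_neg hij]
        split <;> simp
      rw [this, Finset.sum_ite_eq' ({j}ᶜ) k (fun i => α i * (-(α j)/(α k)) ^ 2),
        if_pos (Finset.mem_compl.mpr (by simpa using hkj)), hterm2]
      have h1 : α j ^ 2 / α k ≤ 0 :=
        div_nonpos_of_nonneg_of_nonpos (sq_nonneg _) hk.le
      linarith
  · push_neg at htwo
    have hpos : ∀ i, i ≠ j → 0 < α i := fun i hi =>
      lt_of_le_of_ne (htwo i hi) (Ne.symm (hα i))
    have hsum : 0 ≤ ∑ i, α i := h2 ⟨j, hjneg, hpos⟩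
    set S := ∑ i ∈ ({j}ᶜ : Finset (Fin (n+1))), α i with hS
    have hsum' : 0 ≤ α j + S := by
      rwa [Fintype.sum_eq_add_sum_compl j] at hsum
    have hSpos : 0 < S := by linarith
    refine ⟨fun i => if i = j then -S/α j else 1, ?_, ?_, ?_⟩
    · intro h
      have hh := congrFun h j
      simp only [eq_self_iff_true, if_true, Pi.zero_apply] at hh
      exact absurd hh (div_ne_zero (neg_ne_zero.mpr (ne_of_gt hSpos)) (hα j))
    · rw [Fintype.sum_eq_add_sum_compl j]
      simp only [eq_self_iff_true, if_true]
      have : ∑ i ∈ ({j}ᶜ : Finset (Fin (n+1))),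
          α i * (if i = j then -S/α j else 1) = S := by
        apply Finset.sum_congr rfl
        intro i hi
        have hij : i ≠ j := by simpa using hi
        rw [if_neg hij, mul_one]
      rw [this]
      have h3 : α j * (-S/α j) = -S := by
        rw [mul_comm, div_mul_cancel₀ _ (hα j)]
      rw [h3]
      ring
    · rw [Fintype.sum_eq_add_sum_compl j]
      simp only [eq_self_iff_true, if_true]
      have heq : ∑ i ∈ ({j}ᶜ : Finset (Fin (n+1))),
          α i * (if i = j then -S/α j else 1) ^ 2 = S := by
        apply Finset.sum_congr rfl
        intro i hi
        have hij : i ≠ j := by simpa using hi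
        rw [if_neg hij, one_pow, mul_one]
      rw [heq]
      have hterm : α j * (-S/α j) ^ 2 = S ^ 2 / α j := by
        field_simp [hα j]
      rw [hterm]
      have key : S ^ 2 / α j ≤ -S := by
        rw [div_le_iff_of_neg hjneg]
        nlinarith [mul_nonneg hSpos.le hsum']
      linarith

/-- Positive definiteness criterion for `T diag(α) Tᵗ` (here `m = n + 1`). -/
theorem stmt_4 (n : ℕ) (T : Matrix (Fin n) (Fin (n + 1)) ℝ)
    (α : Fin (n + 1) → ℝ) (hα : ∀ i, α i ≠ 0)
    (hrank : T.rank = n)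
    (hrow : ∀ j : Fin n, (∑ i, α i * T j i) = 0) :
    (T * diagonal α * Tᵀ).PosDef ↔
      ((∀ i, 0 < α i) ∨
        ((∃ j, α j < 0 ∧ ∀ i, i ≠ j → 0 < α i) ∧ (∑ i, α i) < 0)) := by
  classical
  set f := Tᵀ.mulVecLin with hf
  have hrankT : Module.finrank ℝ ↥(LinearMap.range f) = n := by
    have h1 : Module.finrank ℝ ↥(LinearMap.range Tᵀ.mulVecLin) = Tᵀ.rank := rfl
    rw [hf, h1, Matrix.rank_transpose, hrank]
  have hinj : Function.Injective f := by
    rw [← LinearMap.ker_eq_bot, ← Submodule.finrank_eq_zero]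
    have h2 := LinearMap.finrank_range_add_finrank_ker f
    rw [hrankT, Module.finrank_fin_fun] at h2
    omega
  -- the linear functional v ↦ ∑ α i * v i
  let L : (Fin (n+1) → ℝ) →ₗ[ℝ] ℝ :=
    { toFun := fun v => ∑ i, α i * v i
      map_add' := fun x y => by
        simp [mul_add, Finset.sum_add_distrib]
      map_smul' := fun c x => by
        simp [Finset.mul_sum, mul_left_comm] }
  have hLsurj : Function.Surjective L := by
    intro y
    refine ⟨Pi.single 0 (y / α 0), ?_⟩
    simp only [L, LinearMap.coe_mk, AddHom.coe_mk, Pi.single_apply, mul_ite, mul_zero]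
    rw [Finset.sum_ite_eq' Finset.univ (0 : Fin (n+1)) (fun i => α i * (y / α 0))]
    rw [if_pos (Finset.mem_univ _)]
    rw [mul_div_assoc']
    exact mul_div_cancel_left₀ y (hα 0)
  have hkerL : Module.finrank ℝ ↥(LinearMap.ker L) = n := by
    have h2 := LinearMap.finrank_range_add_finrank_ker L
    rw [LinearMap.range_eq_top.mpr hLsurj, finrank_top, Module.finrank_fin_fun,
      Module.finrank_self] at h2
    omega
  have hle : LinearMap.range f ≤ LinearMap.ker L := by
    rintro _ ⟨x, rfl⟩
    simp only [LinearMap.mem_ker]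
    show ∑ i, α i * (Tᵀ *ᵥ x) i = 0
    have hswap : ∑ i, α i * (Tᵀ *ᵥ x) i = ∑ jj, (∑ i, α i * T jj i) * x jj := by
      simp only [Matrix.mulVec, dotProduct, Matrix.transpose_apply, Finset.mul_sum]
      rw [Finset.sum_comm]
      exact Finset.sum_congr rfl fun jj _ => by
        rw [Finset.sum_mul]
        exact Finset.sum_congr rfl fun i _ => by ring
    rw [hswap]
    exact Finset.sum_eq_zero fun jj _ => by rw [hrow jj, zero_mul]
  have heq : LinearMap.range f = LinearMap.ker L :=
    Submodule.eq_of_le_of_finrank_le hle (le_of_eq (by rw [hrankT, hkerL]))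
  have hconstraint : ∀ x, ∑ i, α i * (f x) i = 0 := by
    intro x
    exact hle ⟨x, rfl⟩
  have hquad : ∀ x : Fin n → ℝ, x ⬝ᵥ (T * diagonal α * Tᵀ) *ᵥ x = ∑ i, α i * (f x) i ^ 2 := by
    intro x
    have h1 : (T * diagonal α * Tᵀ) *ᵥ x = T *ᵥ (diagonal α *ᵥ (Tᵀ *ᵥ x)) := by
      rw [← mulVec_mulVec, ← mulVec_mulVec]
    have h2 : x ᵥ* T = Tᵀ *ᵥ x := by
      rw [← Matrix.vecMul_transpose, Matrix.transpose_transpose]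
    rw [h1, Matrix.dotProduct_mulVec, h2]
    show (Tᵀ *ᵥ x) ⬝ᵥ (diagonal α *ᵥ (Tᵀ *ᵥ x)) = _
    simp only [dotProduct]
    apply Finset.sum_congr rfl
    intro i _
    rw [Matrix.mulVec_diagonal]
    show (Tᵀ *ᵥ x) i * (α i * (Tᵀ *ᵥ x) i) = α i * (f x) i ^ 2
    have : (f x) i = (Tᵀ *ᵥ x) i := rfl
    rw [this]; ring
  have hherm : (T * diagonal α * Tᵀ).IsHermitian := by
    show (T * diagonal α * Tᵀ)ᴴ = T * diagonal α * Tᵀ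
    rw [Matrix.conjTranspose_eq_transpose_of_trivial]
    simp [Matrix.transpose_mul, Matrix.diagonal_transpose, Matrix.mul_assoc]
  constructor
  · intro h
    by_contra hc
    obtain ⟨v, hv0, hvc, hvq⟩ := key_neg α hα hc
    have hvmem : v ∈ LinearMap.ker L := by
      simp only [LinearMap.mem_ker]
      exact hvc
    rw [← heq] at hvmem
    obtain ⟨x, hx⟩ := hvmem
    have hx0 : x ≠ 0 := by
      intro h0
      apply hv0
      rw [← hx, h0, map_zero]
    have := h.dotProduct_mulVec_pos hx0
    rw [show (star x) = x from rfl, hquad, hx] at this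
    linarith
  · intro hcond
    refine Matrix.PosDef.of_dotProduct_mulVec_pos hherm ?_
    intro x hx
    rw [show (star x) = x from rfl, hquad]
    apply key_pos α hα hcond _ (hconstraint x)
    intro h0
    exact hx (hinj (by rw [h0, map_zero]))
end

section
/- Let $0 < z_1 < \dots < z_m$ and let $t_1, \dots, t_{m-1}$ be the roots of $\varphi(t) = \sum_{k=1}^m \frac{z_k}{z_k - t} = 0$. For $i = 1,\dots,m-1$ define $b^i \in \mathbb{R}^m$ with entries $b^i_k = \mu_i \frac{z_k}{z_k - t_i}$, where $\mu_i > 0$ is chosen so that $\sum_{k=1}^m (b^i_k)^2 = 1$. Then: (1) $\sum_{k=1}^m b^i_k = 0$ for all $i$; (2) for $i \neq j$, the componentwise product satisfies $b^i \diamond b^j = \frac{\mu_j t_i}{t_i - t_j} b^i + \frac{\mu_i t_j}{t_j - t_i} b^j$; (3) for $i \neq j$, $\sum_{k=1}^m b^i_k b^j_k = 0$, i.e., the $b^i$ form an orthonormal system. -/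
/-- Example 4.5: properties of the super-adapted system `b^i_k = μ_i z_k/(z_k - t_i)`. -/
theorem stmt_8 (m p : ℕ) (z : Fin m → ℝ) (hz : StrictMono z) (hzpos : ∀ k, 0 < z k)
    (t : Fin p → ℝ) (ht : Function.Injective t) (htz : ∀ i k, t i ≠ z k)
    (hroot : ∀ i, (∑ k, z k / (z k - t i)) = 0)
    (μ : Fin p → ℝ) (hμ : ∀ i, 0 < μ i)
    (b : Fin p → Fin m → ℝ) (hb : ∀ i k, b i k = μ i * (z k / (z k - t i)))
    (hnorm : ∀ i, (∑ k, (b i k) ^ 2) = 1) :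
    (∀ i, (∑ k, b i k) = 0) ∧
    (∀ i j, i ≠ j →
      b i * b j = (μ j * t i / (t i - t j)) • b i + (μ i * t j / (t j - t i)) • b j) ∧
    (∀ i j, i ≠ j → (∑ k, b i k * b j k) = 0) := by
  have hsum : ∀ i, (∑ k, b i k) = 0 := by
    intro i
    calc (∑ k, b i k) = μ i * ∑ k, z k / (z k - t i) := by
          rw [Finset.mul_sum]; exact Finset.sum_congr rfl fun k _ => hb i k
      _ = 0 := by rw [hroot i, mul_zero]
  have hprod : ∀ i j, i ≠ j →
      b i * b j = (μ j * t i / (t i - t j)) • b i + (μ i * t j / (t j - t i)) • b j := by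
    intro i j hij
    funext k
    have h1 : z k - t i ≠ 0 := sub_ne_zero.mpr (Ne.symm (htz i k))
    have h2 : z k - t j ≠ 0 := sub_ne_zero.mpr (Ne.symm (htz j k))
    have h3 : t i - t j ≠ 0 := sub_ne_zero.mpr (fun h => hij (ht h))
    have h4 : t j - t i ≠ 0 := sub_ne_zero.mpr (fun h => hij (ht h.symm))
    simp only [Pi.mul_apply, Pi.add_apply, Pi.smul_apply, smul_eq_mul, hb]
    field_simp
    ring
  refine ⟨hsum, hprod, fun i j hij => ?_⟩
  have := hprod i j hij
  calc (∑ k, b i k * b j k) = ∑ k, ((μ j * t i / (t i - t j)) * b i k +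
        (μ i * t j / (t j - t i)) * b j k) := by
        refine Finset.sum_congr rfl fun k _ => ?_
        have hk := congrFun this k
        simpa using hk
    _ = 0 := by
        rw [Finset.sum_add_distrib, ← Finset.mul_sum, ← Finset.mul_sum, hsum, hsum,
          mul_zero, mul_zero, add_zero]
end

section
/- Let $b^1, \dots, b^{m-1} \in \mathbb{R}^m$ be an orthonormal system of vectors each orthogonal to $(1,1,\dots,1)$, and suppose some $b^i$ has the property that $b^i \diamond b^j \in \mathbb{R} b^i$ for every $j \neq i$. If $b^i$ has exactly $r$ nonzero coordinates, then $r = 2$. (Equivalently: if $r \geq 3$, the vectors $b^j$, $j \neq i$, would be linearly dependent, a contradiction.) -/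
/-- If `b¹,…,b^{m-1}` is an orthonormal system in `(1,…,1)^⊥ ⊂ ℝᵐ` and for some `i` the
vector `b^i ⋄ b^j` is a multiple of `b^i` for every `j ≠ i`, then `b^i` has exactly two
nonzero coordinates. -/
theorem stmt_9 (m : ℕ) (b : Fin (m - 1) → Fin m → ℝ)
    (horth : ∀ i j, (∑ k, b i k * b j k) = if i = j then (1:ℝ) else 0)
    (hsum : ∀ i, (∑ k, b i k) = 0)
    (i : Fin (m - 1))
    (hmult : ∀ j, j ≠ i → ∃ c : ℝ, b i * b j = c • b i) :
    (Finset.univ.filter fun k => b i k ≠ 0).card = 2 := by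
  classical
  have hm1 : 0 < m - 1 := i.pos
  have hm : 2 ≤ m := by omega
  have hm0 : (0:ℝ) < m := by exact_mod_cast Nat.lt_of_lt_of_le (by norm_num) hm
  set S := Finset.univ.filter fun k => b i k ≠ 0 with hS
  have hii : (∑ k, b i k * b i k) = 1 := by simpa using horth i i
  have hne : ∃ k, b i k ≠ 0 := by
    by_contra h
    push_neg at h
    simp [h] at hii
  -- there are two support coordinates with different values
  have hdiff : ∃ k1 k2, b i k1 ≠ 0 ∧ b i k2 ≠ 0 ∧ b i k1 ≠ b i k2 := by
    by_contra h
    push_neg at h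
    obtain ⟨k0, hk0⟩ := hne
    have hsplit := Finset.sum_filter_add_sum_filter_not Finset.univ
      (fun k => b i k ≠ 0) (fun k => b i k)
    have h1 : ∑ k ∈ Finset.univ.filter (fun k => b i k ≠ 0), b i k
        = S.card * b i k0 := by
      rw [Finset.sum_congr rfl (fun k hk => h k k0 (by simpa [hS] using hk) hk0)]
      simp [mul_comm]
      exact Or.inl rfl
    have h2 : ∑ k ∈ Finset.univ.filter (fun k => ¬ b i k ≠ 0), b i k = 0 := by
      apply Finset.sum_eq_zero
      intro k hk
      simpa using (Finset.mem_filter.mp hk).2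
    rw [h1, h2, add_zero, hsum i] at hsplit
    have hcpos : 0 < S.card := Finset.card_pos.mpr ⟨k0, by simp [hS, hk0]⟩
    have : (S.card : ℝ) ≠ 0 := by positivity
    exact hk0 (by
      have := mul_eq_zero.mp hsplit
      tauto)
  obtain ⟨k1, k2, hk1, hk2, hk12v⟩ := hdiff
  have hk12 : k1 ≠ k2 := fun h => hk12v (by rw [h])
  have hsub : ({k1, k2} : Finset (Fin m)) ⊆ S := by
    intro k hk
    simp only [Finset.mem_insert, Finset.mem_singleton] at hk
    rcases hk with rfl | rfl <;> simp [hS, hk1, hk2]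
  have hge : 2 ≤ S.card := by
    calc 2 = ({k1, k2} : Finset (Fin m)).card := (Finset.card_pair hk12).symm
    _ ≤ S.card := Finset.card_le_card hsub
  by_contra hcard
  have h3 : 3 ≤ S.card := by omega
  have hk3 : ∃ k3, b i k3 ≠ 0 ∧ k3 ≠ k1 ∧ k3 ≠ k2 := by
    have : (S \ {k1, k2}).Nonempty := by
      rw [← Finset.card_pos]
      have := Finset.le_card_sdiff ({k1, k2} : Finset (Fin m)) S
      have hc2 : ({k1, k2} : Finset (Fin m)).card = 2 := Finset.card_pair hk12
      omega
    obtain ⟨k3, hk3⟩ := this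
    rw [Finset.mem_sdiff] at hk3
    refine ⟨k3, by simpa [hS] using hk3.1, ?_, ?_⟩ <;>
      · intro h; apply hk3.2; simp [h]
    
  obtain ⟨k3, hk3, hk31, hk32⟩ := hk3
  -- the completed orthonormal family
  have hsq : Real.sqrt m * Real.sqrt m = m := Real.mul_self_sqrt hm0.le
  have hsqpos : (0:ℝ) < Real.sqrt m := Real.sqrt_pos.mpr hm0
  set v : Option (Fin (m-1)) → Fin m → ℝ :=
    fun o k => match o with
      | none => (Real.sqrt m)⁻¹
      | some j => b j k with hv
  have hdot : ∀ o o', (∑ k, v o k * v o' k) = if o = o' then (1:ℝ) else 0 := by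
    rintro (_|j) (_|j')
    · simp only [hv, if_pos rfl]
      rw [Finset.sum_const, Finset.card_univ, Fintype.card_fin, nsmul_eq_mul,
        ← mul_inv, hsq]
      exact mul_inv_cancel₀ (ne_of_gt hm0)
    · simp only [hv, reduceCtorEq, if_false]
      rw [← Finset.mul_sum, hsum j', mul_zero]
    · simp only [hv, reduceCtorEq, if_false]
      rw [Finset.sum_congr rfl (fun k _ => mul_comm _ _), ← Finset.mul_sum, hsum j, mul_zero]
    · simp only [hv, Option.some.injEq]
      rw [horth j j']
  have hdotsum : ∀ (y : Fin m → ℝ) (c : Option (Fin (m-1)) → ℝ),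
      (∑ o, c o • v o) = y → ∀ o0, c o0 = ∑ k, y k * v o0 k := by
    intro y c hc o0
    have step1 : ∀ k, y k * v o0 k = ∑ o, c o * (v o k * v o0 k) := by
      intro k
      rw [← hc]
      simp only [Finset.sum_apply, Pi.smul_apply, smul_eq_mul, Finset.sum_mul, mul_assoc]
    calc c o0 = ∑ o, c o * (if o = o0 then 1 else 0) := by simp
    _ = ∑ o, c o * ∑ k, v o k * v o0 k := by
        exact Finset.sum_congr rfl fun o _ => by rw [hdot]
    _ = ∑ o, ∑ k, c o * (v o k * v o0 k) := by
        exact Finset.sum_congr rfl fun o _ => by rw [Finset.mul_sum]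
    _ = ∑ k, ∑ o, c o * (v o k * v o0 k) := Finset.sum_comm
    _ = ∑ k, y k * v o0 k := Finset.sum_congr rfl fun k _ => (step1 k).symm
  have hli : LinearIndependent ℝ v := by
    rw [Fintype.linearIndependent_iff]
    intro g hg o0
    have := hdotsum 0 g hg o0
    simpa using this
  have hcardv : Fintype.card (Option (Fin (m-1))) = Module.finrank ℝ (Fin m → ℝ) := by
    rw [Module.finrank_fintype_fun_eq_card]
    simp
    omega
  have hspan := hli.span_eq_top_of_card_eq_finrank hcardv
  set x : Fin m → ℝ :=
    fun k => (if k = k1 then (1:ℝ) else 0) - (if k = k2 then 1 else 0) with hx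
  have hxmem : x ∈ Submodule.span ℝ (Set.range v) := hspan ▸ Submodule.mem_top
  obtain ⟨c, hc⟩ := (Submodule.mem_span_range_iff_exists_fun ℝ).mp hxmem
  have hcoef := hdotsum x c hc
  have hxdot : ∀ (w : Fin m → ℝ), (∑ k, x k * w k) = w k1 - w k2 := by
    intro w
    simp only [hx, sub_mul, ite_mul, one_mul, zero_mul, Finset.sum_sub_distrib]
    rw [Finset.sum_ite_eq' Finset.univ k1 w, Finset.sum_ite_eq' Finset.univ k2 w]
    simp
  -- coefficients vanish
  have hcnone : c none = 0 := by
    rw [hcoef none]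
    simp only [hv]
    rw [hxdot]
    ring
  have hcj : ∀ j, j ≠ i → c (some j) = 0 := by
    intro j hj
    obtain ⟨cj, hcj⟩ := hmult j hj
    have e1 : b i k1 * b j k1 = cj * b i k1 := by
      have := congrFun hcj k1; simpa using this
    have e2 : b i k2 * b j k2 = cj * b i k2 := by
      have := congrFun hcj k2; simpa using this
    have hb1 : b j k1 = cj := mul_left_cancel₀ hk1 (e1.trans (mul_comm _ _))
    have hb2 : b j k2 = cj := mul_left_cancel₀ hk2 (e2.trans (mul_comm _ _))
    rw [hcoef (some j)]
    simp only [hv]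
    rw [hxdot, hb1, hb2, sub_self]
  have hci : c (some i) = b i k1 - b i k2 := by
    rw [hcoef (some i)]
    simp only [hv]
    rw [hxdot]
  -- evaluate at k3
  have heval := congrFun hc k3
  simp only [Finset.sum_apply, Pi.smul_apply, smul_eq_mul] at heval
  rw [Fintype.sum_option] at heval
  have hsum3 : ∑ j, c (some j) * v (some j) k3 = c (some i) * b i k3 :=
    Finset.sum_eq_single i (fun j _ hj => by rw [hcj j hj, zero_mul])
      (fun h => absurd (Finset.mem_univ i) h)
  rw [hcnone, zero_mul, zero_add, hsum3, hci] at heval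
  have hx3 : x k3 = 0 := by simp [hx, hk31, hk32]
  rw [hx3] at heval
  have := mul_ne_zero (sub_ne_zero.mpr hk12v) hk3
  exact this heval
end

section
/- Let $\mathcal{P}^1, \mathcal{P}^2$ be partitions of $\{1,\dots,m\}$ with $m_1$ and $m_2$ parts respectively, such that any part of $\mathcal{P}^1$ and any part of $\mathcal{P}^2$ intersect in at most one element, and such that $m_1 + m_2 = m + 1$. Let $T$ be a symmetric $m \times m$ real matrix with $(1,\dots,1)$ in its kernel such that $T_{ij} \neq 0$ with $i \neq j$ implies $i,j$ lie in a common part of $\mathcal{P}^1$ or a common part of $\mathcal{P}^2$. Then $T = T^{(1)} + T^{(2)}$ where each $T^{(a)}$ is a symmetric $m \times m$ matrix with $(1,\dots,1)$ in its kernel that agrees with $\mathcal{P}^a$ (i.e., $T^{(a)}_{ij} = 0$ whenever $i \neq j$ lie in different parts of $\mathcal{P}^a$). -/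
open Matrix

/-- Decomposition `T = T⁽¹⁾ + T⁽²⁾` of a symmetric matrix whose support agrees with a
pair of partitions meeting in at most one element. -/
theorem stmt_12 (m m1 m2 : ℕ) (hm : m1 + m2 = m + 1)
    (S1 : Fin m1 → Finset (Fin m)) (S2 : Fin m2 → Finset (Fin m))
    (hS1ne : ∀ i, (S1 i).Nonempty) (hS2ne : ∀ i, (S2 i).Nonempty)
    (hS1disj : ∀ i i', i ≠ i' → Disjoint (S1 i) (S1 i'))
    (hS2disj : ∀ i i', i ≠ i' → Disjoint (S2 i) (S2 i'))
    (hS1cov : Finset.univ.biUnion S1 = Finset.univ)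
    (hS2cov : Finset.univ.biUnion S2 = Finset.univ)
    (hint : ∀ (i1 : Fin m1) (i2 : Fin m2), (S1 i1 ∩ S2 i2).card ≤ 1)
    (T : Matrix (Fin m) (Fin m) ℝ) (hTsym : T.IsSymm)
    (hTker : T *ᵥ (fun _ => (1:ℝ)) = 0)
    (hTsupp : ∀ i j, i ≠ j → T i j ≠ 0 →
      (∃ r, i ∈ S1 r ∧ j ∈ S1 r) ∨ (∃ r, i ∈ S2 r ∧ j ∈ S2 r)) :
    ∃ T1 T2 : Matrix (Fin m) (Fin m) ℝ,
      T = T1 + T2 ∧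
      T1.IsSymm ∧ T2.IsSymm ∧
      T1 *ᵥ (fun _ => (1:ℝ)) = 0 ∧ T2 *ᵥ (fun _ => (1:ℝ)) = 0 ∧
      (∀ i j, i ≠ j → (∀ r, ¬(i ∈ S1 r ∧ j ∈ S1 r)) → T1 i j = 0) ∧
      (∀ i j, i ≠ j → (∀ r, ¬(i ∈ S2 r ∧ j ∈ S2 r)) → T2 i j = 0) := by
  classical
  set f1 : Matrix (Fin m) (Fin m) ℝ := fun i j =>
    if i ≠ j ∧ ∃ r, i ∈ S1 r ∧ j ∈ S1 r then T i j else 0 with hf1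
  set f2 : Matrix (Fin m) (Fin m) ℝ := fun i j =>
    if i ≠ j ∧ (¬ ∃ r, i ∈ S1 r ∧ j ∈ S1 r) ∧ ∃ r, i ∈ S2 r ∧ j ∈ S2 r then T i j
    else 0 with hf2
  set T1 : Matrix (Fin m) (Fin m) ℝ := fun i j =>
    if i = j then -∑ k ∈ Finset.univ.erase i, f1 i k else f1 i j with hT1
  set T2 : Matrix (Fin m) (Fin m) ℝ := fun i j =>
    if i = j then -∑ k ∈ Finset.univ.erase i, f2 i k else f2 i j with hT2
  have hTs : ∀ i j, T j i = T i j := fun i j => congrFun (congrFun hTsym i) j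
  have hsum12 : ∀ i j, i ≠ j → f1 i j + f2 i j = T i j := by
    intro i j hij
    by_cases h1 : ∃ r, i ∈ S1 r ∧ j ∈ S1 r
    · simp [hf1, hf2, hij, h1]
    · by_cases h2 : ∃ r, i ∈ S2 r ∧ j ∈ S2 r
      · simp [hf1, hf2, hij, h1, h2]
      · have hT0 : T i j = 0 := by
          by_contra h
          rcases hTsupp i j hij h with h' | h' <;> [exact h1 h'; exact h2 h']
        simp [hf1, hf2, hij, h1, h2, hT0]
  have hker : ∀ i, ∑ j, T i j = 0 := by
    intro i
    have := congrFun hTker i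
    simpa [mulVec, dotProduct] using this
  have hdiag : ∀ i, T i i = -∑ k ∈ Finset.univ.erase i, T i k := by
    intro i
    have h := Finset.add_sum_erase Finset.univ (fun j => T i j)
      (Finset.mem_univ i)
    have := hker i
    linarith [h.symm ▸ this, h]
  refine ⟨T1, T2, ?_, ?_, ?_, ?_, ?_, ?_, ?_⟩
  · ext i j
    by_cases hij : i = j
    · subst hij
      have : ∑ k ∈ Finset.univ.erase i, (f1 i k + f2 i k)
          = ∑ k ∈ Finset.univ.erase i, T i k := by
        refine Finset.sum_congr rfl fun k hk => ?_
        exact hsum12 i k (Ne.symm (Finset.ne_of_mem_erase hk))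
      have e1 : T1 i i = -∑ k ∈ Finset.univ.erase i, f1 i k := by simp [hT1]
      have e2 : T2 i i = -∑ k ∈ Finset.univ.erase i, f2 i k := by simp [hT2]
      rw [Matrix.add_apply, e1, e2, hdiag i, ← this, Finset.sum_add_distrib]
      ring
    · rw [Matrix.add_apply]; simp only [hT1, hT2, Matrix.add_apply, if_neg hij]
      exact (hsum12 i j hij).symm
  · ext i j
    by_cases hij : i = j
    · subst hij; rw [Matrix.transpose_apply]
    · rw [Matrix.transpose_apply]; simp only [Matrix.transpose_apply, hT1, if_neg hij, if_neg (Ne.symm hij)]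
      by_cases h1 : ∃ r, i ∈ S1 r ∧ j ∈ S1 r
      · rcases h1 with ⟨r, hr1, hr2⟩
        have ha : ∃ r, i ∈ S1 r ∧ j ∈ S1 r := ⟨r, hr1, hr2⟩
        have hb : ∃ r, j ∈ S1 r ∧ i ∈ S1 r := ⟨r, hr2, hr1⟩
        simp [hf1, hij, Ne.symm hij, hTs i j, ha, hb]
      · have h1' : ¬ ∃ r, j ∈ S1 r ∧ i ∈ S1 r := fun ⟨r, a, b⟩ => h1 ⟨r, b, a⟩
        simp [hf1, h1, h1']
  · ext i j
    by_cases hij : i = j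
    · subst hij; rw [Matrix.transpose_apply]
    · rw [Matrix.transpose_apply]; simp only [Matrix.transpose_apply, hT2, if_neg hij, if_neg (Ne.symm hij)]
      have e1 : (∃ r, i ∈ S1 r ∧ j ∈ S1 r) ↔ ∃ r, j ∈ S1 r ∧ i ∈ S1 r :=
        ⟨fun ⟨r, a, b⟩ => ⟨r, b, a⟩, fun ⟨r, a, b⟩ => ⟨r, b, a⟩⟩
      have e2 : (∃ r, i ∈ S2 r ∧ j ∈ S2 r) ↔ ∃ r, j ∈ S2 r ∧ i ∈ S2 r :=
        ⟨fun ⟨r, a, b⟩ => ⟨r, b, a⟩, fun ⟨r, a, b⟩ => ⟨r, b, a⟩⟩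
      simp only [hf2, hij, Ne.symm hij, ne_eq, not_false_eq_true, true_and,
        hTs i j]
      simp only [e1, e2]
  · funext i
    have h := Finset.add_sum_erase Finset.univ (fun j => T1 i j)
      (Finset.mem_univ i)
    beta_reduce at h
    have hd : T1 i i = -∑ k ∈ Finset.univ.erase i, f1 i k := by simp [hT1]
    have hoff : ∑ k ∈ Finset.univ.erase i, T1 i k
        = ∑ k ∈ Finset.univ.erase i, f1 i k := by
      refine Finset.sum_congr rfl fun k hk => ?_
      simp [hT1, (Finset.ne_of_mem_erase hk : k ≠ i).symm]
    simp only [mulVec, dotProduct, mul_one, Pi.zero_apply]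
    rw [← h, hd, hoff]; ring
  · funext i
    have h := Finset.add_sum_erase Finset.univ (fun j => T2 i j)
      (Finset.mem_univ i)
    beta_reduce at h
    have hd : T2 i i = -∑ k ∈ Finset.univ.erase i, f2 i k := by simp [hT2]
    have hoff : ∑ k ∈ Finset.univ.erase i, T2 i k
        = ∑ k ∈ Finset.univ.erase i, f2 i k := by
      refine Finset.sum_congr rfl fun k hk => ?_
      simp [hT2, (Finset.ne_of_mem_erase hk : k ≠ i).symm]
    simp only [mulVec, dotProduct, mul_one, Pi.zero_apply]
    rw [← h, hd, hoff]; ring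
  · intro i j hij hno
    have : ¬ ∃ r, i ∈ S1 r ∧ j ∈ S1 r := fun ⟨r, h⟩ => hno r h
    simp [hT1, hf1, hij, this]
  · intro i j hij hno
    have : ¬ ∃ r, i ∈ S2 r ∧ j ∈ S2 r := fun ⟨r, h⟩ => hno r h
    simp [hT2, hf2, hij, this]
end

section
/- Let $\mathcal{P}^1 = \{S^1_i\}$, $\mathcal{P}^2 = \{S^2_j\}$ be partitions of $\{1,\dots,m\}$ such that each $S^1_i \cap S^2_j$ has at most one element, and let $\chi^a_i \in \mathbb{R}^m$ be the indicator vectors of the parts. Let $T$ be an $m \times m$ real matrix. Then $T$ satisfies $T(x \diamond y) = (Tx) \diamond y + x \diamond (Ty)$ for all $x \in \operatorname{Span}(\chi^1_1,\dots,\chi^1_{m_1})$ and $y \in \operatorname{Span}(\chi^2_1,\dots,\chi^2_{m_2})$ if and only if for all $i \neq j$ with $T_{ij} \neq 0$, the indices $i$ and $j$ belong to a common part of $\mathcal{P}^1$ or a common part of $\mathcal{P}^2$ — provided additionally that each row of $T$ sums to zero and $T$ is symmetric. -/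
open Matrix

/-- The 'derivation' identity `T(x⋄y) = (Tx)⋄y + x⋄(Ty)` on the spans of the indicator
vectors of the two partitions is equivalent to the support condition on `T`. -/
theorem stmt_13 (m m1 m2 : ℕ)
    (S1 : Fin m1 → Finset (Fin m)) (S2 : Fin m2 → Finset (Fin m))
    (hS1ne : ∀ i, (S1 i).Nonempty) (hS2ne : ∀ i, (S2 i).Nonempty)
    (hS1disj : ∀ i i', i ≠ i' → Disjoint (S1 i) (S1 i'))
    (hS2disj : ∀ i i', i ≠ i' → Disjoint (S2 i) (S2 i'))
    (hS1cov : Finset.univ.biUnion S1 = Finset.univ)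
    (hS2cov : Finset.univ.biUnion S2 = Finset.univ)
    (hint : ∀ (i1 : Fin m1) (i2 : Fin m2), (S1 i1 ∩ S2 i2).card ≤ 1)
    (T : Matrix (Fin m) (Fin m) ℝ) (hTsym : T.IsSymm)
    (hTrow : T *ᵥ (fun _ => (1:ℝ)) = 0) :
    ((∀ x ∈ Submodule.span ℝ
        (Set.range fun r : Fin m1 => fun k : Fin m => if k ∈ S1 r then (1:ℝ) else 0),
      ∀ y ∈ Submodule.span ℝ
        (Set.range fun r : Fin m2 => fun k : Fin m => if k ∈ S2 r then (1:ℝ) else 0),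
        T *ᵥ (x * y) = (T *ᵥ x) * y + x * (T *ᵥ y)) ↔
      (∀ i j, i ≠ j → T i j ≠ 0 →
        (∃ r, i ∈ S1 r ∧ j ∈ S1 r) ∨ (∃ r, i ∈ S2 r ∧ j ∈ S2 r))) := by
  classical
  -- basic partition facts
  have mem1 : ∀ k : Fin m, ∃ r, k ∈ S1 r := by
    intro k
    have : k ∈ Finset.univ.biUnion S1 := hS1cov.symm ▸ Finset.mem_univ k
    simpa [Finset.mem_biUnion] using this
  have mem2 : ∀ k : Fin m, ∃ r, k ∈ S2 r := by
    intro k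
    have : k ∈ Finset.univ.biUnion S2 := hS2cov.symm ▸ Finset.mem_univ k
    simpa [Finset.mem_biUnion] using this
  have uniq1 : ∀ (k : Fin m) (r r' : Fin m1), k ∈ S1 r → k ∈ S1 r' → r = r' := by
    intro k r r' h h'
    by_contra hne
    exact (Finset.disjoint_left.mp (hS1disj r r' hne) h) h'
  have uniq2 : ∀ (k : Fin m) (r r' : Fin m2), k ∈ S2 r → k ∈ S2 r' → r = r' := by
    intro k r r' h h'
    by_contra hne
    exact (Finset.disjoint_left.mp (hS2disj r r' hne) h) h'
  have hrow : ∀ i : Fin m, ∑ j, T i j = 0 := by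
    intro i
    have := congrFun hTrow i
    simpa [Matrix.mulVec, dotProduct] using this
  have sum_ind : ∀ (S : Finset (Fin m)) (f : Fin m → ℝ),
      ∑ j, f j * (if j ∈ S then (1:ℝ) else 0) = ∑ j ∈ S, f j := by
    intro S f
    simp [mul_ite, Finset.sum_ite_mem]
  constructor
  · -- derivation identity ⟹ support condition
    intro H i j hij hT
    obtain ⟨a, ha⟩ := mem1 j
    obtain ⟨b, hb⟩ := mem2 j
    by_contra hcon
    push_neg at hcon
    obtain ⟨h1, h2⟩ := hcon
    have hi1 : i ∉ S1 a := fun h => h1 a h ha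
    have hi2 : i ∉ S2 b := fun h => h2 b h hb
    have hx : (fun k : Fin m => if k ∈ S1 a then (1:ℝ) else 0) ∈ Submodule.span ℝ
        (Set.range fun r : Fin m1 => fun k : Fin m => if k ∈ S1 r then (1:ℝ) else 0) :=
      Submodule.subset_span ⟨a, rfl⟩
    have hy : (fun k : Fin m => if k ∈ S2 b then (1:ℝ) else 0) ∈ Submodule.span ℝ
        (Set.range fun r : Fin m2 => fun k : Fin m => if k ∈ S2 r then (1:ℝ) else 0) :=
      Submodule.subset_span ⟨b, rfl⟩
    have hid := congrFun (H _ hx _ hy) i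
    have hprod : ∀ k : Fin m,
        ((fun k : Fin m => if k ∈ S1 a then (1:ℝ) else 0) *
          (fun k : Fin m => if k ∈ S2 b then (1:ℝ) else 0)) k
          = (if k ∈ S1 a ∩ S2 b then (1:ℝ) else 0) := by
      intro k
      by_cases h1' : k ∈ S1 a <;> by_cases h2' : k ∈ S2 b <;>
        simp [Pi.mul_apply, h1', h2']
    have hinter : S1 a ∩ S2 b = {j} := by
      refine Finset.eq_singleton_iff_unique_mem.mpr ⟨Finset.mem_inter.mpr ⟨ha, hb⟩, ?_⟩
      intro x hx'
      exact Finset.card_le_one.mp (hint a b) x hx' j (Finset.mem_inter.mpr ⟨ha, hb⟩)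
    have hL : (T *ᵥ ((fun k : Fin m => if k ∈ S1 a then (1:ℝ) else 0) *
        (fun k : Fin m => if k ∈ S2 b then (1:ℝ) else 0))) i = T i j := by
      show ∑ k, T i k * _ = T i j
      calc ∑ k, T i k * ((fun k : Fin m => if k ∈ S1 a then (1:ℝ) else 0) *
              (fun k : Fin m => if k ∈ S2 b then (1:ℝ) else 0)) k
          = ∑ k, T i k * (if k ∈ S1 a ∩ S2 b then (1:ℝ) else 0) := by
            refine Finset.sum_congr rfl fun k _ => by rw [hprod k]
        _ = ∑ k ∈ S1 a ∩ S2 b, T i k := sum_ind _ _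
        _ = T i j := by rw [hinter, Finset.sum_singleton]
    have hR : ((T *ᵥ fun k : Fin m => if k ∈ S1 a then (1:ℝ) else 0) *
        (fun k : Fin m => if k ∈ S2 b then (1:ℝ) else 0) +
        (fun k : Fin m => if k ∈ S1 a then (1:ℝ) else 0) *
        (T *ᵥ fun k : Fin m => if k ∈ S2 b then (1:ℝ) else 0)) i = 0 := by
      simp [Pi.add_apply, Pi.mul_apply, hi1, hi2]
    rw [hL, hR] at hid
    exact hT hid
  · -- support condition ⟹ derivation identity
    intro hsupp
    -- T i j = 0 whenever i, j do not share a part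
    have hT0 : ∀ i j : Fin m, (∀ r, ¬(i ∈ S1 r ∧ j ∈ S1 r)) →
        (∀ r, ¬(i ∈ S2 r ∧ j ∈ S2 r)) → T i j = 0 := by
      intro i j h1 h2
      by_contra hT
      have hij : i ≠ j := by
        rintro rfl
        obtain ⟨r, hr⟩ := mem1 i
        exact h1 r ⟨hr, hr⟩
      rcases hsupp i j hij hT with ⟨r, hr⟩ | ⟨r, hr⟩
      · exact h1 r hr
      · exact h2 r hr
    -- componentwise identity for generators
    have key : ∀ (a : Fin m1) (b : Fin m2) (i : Fin m),
        ∑ j ∈ S1 a ∩ S2 b, T i j =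
          (∑ j ∈ S1 a, T i j) * (if i ∈ S2 b then (1:ℝ) else 0) +
          (if i ∈ S1 a then (1:ℝ) else 0) * (∑ j ∈ S2 b, T i j) := by
      intro a b i
      by_cases hi1 : i ∈ S1 a <;> by_cases hi2 : i ∈ S2 b
      · -- i in both parts: use row sum zero
        have hc : ∀ j ∈ (S1 a ∪ S2 b)ᶜ, T i j = 0 := by
          intro j hj
          rw [Finset.mem_compl, Finset.mem_union] at hj
          push_neg at hj
          refine hT0 i j ?_ ?_
          · rintro r ⟨hir, hjr⟩
            exact hj.1 ((uniq1 i r a hir hi1) ▸ hjr)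
          · rintro r ⟨hir, hjr⟩
            exact hj.2 ((uniq2 i r b hir hi2) ▸ hjr)
        have hcompl : ∑ j ∈ (S1 a ∪ S2 b)ᶜ, T i j = 0 :=
          Finset.sum_eq_zero hc
        have hU : ∑ j ∈ S1 a ∪ S2 b, T i j = 0 := by
          have := Finset.sum_add_sum_compl (S1 a ∪ S2 b) (fun j => T i j)
          rw [hcompl, hrow i, add_zero] at this
          exact this
        have := Finset.sum_union_inter (s₁ := S1 a) (s₂ := S2 b) (f := fun j => T i j)
        rw [hU, zero_add] at this
        simp [hi1, hi2, this]
      · -- i ∈ S1 a, i ∉ S2 b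
        have : ∑ j ∈ S1 a ∩ S2 b, T i j = ∑ j ∈ S2 b, T i j := by
          refine Finset.sum_subset Finset.inter_subset_right ?_
          intro j hj hj'
          have hj1 : j ∉ S1 a := fun h => hj' (Finset.mem_inter.mpr ⟨h, hj⟩)
          refine hT0 i j ?_ ?_
          · rintro r ⟨hir, hjr⟩
            exact hj1 ((uniq1 i r a hir hi1) ▸ hjr)
          · rintro r ⟨hir, hjr⟩
            exact hi2 ((uniq2 j r b hjr hj) ▸ hir)
        simp [hi1, hi2, this]
      · -- i ∉ S1 a, i ∈ S2 b
        have : ∑ j ∈ S1 a ∩ S2 b, T i j = ∑ j ∈ S1 a, T i j := by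
          refine Finset.sum_subset Finset.inter_subset_left ?_
          intro j hj hj'
          have hj2 : j ∉ S2 b := fun h => hj' (Finset.mem_inter.mpr ⟨hj, h⟩)
          refine hT0 i j ?_ ?_
          · rintro r ⟨hir, hjr⟩
            exact hi1 ((uniq1 j r a hjr hj) ▸ hir)
          · rintro r ⟨hir, hjr⟩
            exact hj2 ((uniq2 i r b hir hi2) ▸ hjr)
        simp [hi1, hi2, this]
      · -- i in neither part
        have : ∑ j ∈ S1 a ∩ S2 b, T i j = 0 := by
          refine Finset.sum_eq_zero fun j hj => ?_
          rw [Finset.mem_inter] at hj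
          refine hT0 i j ?_ ?_
          · rintro r ⟨hir, hjr⟩
            exact hi1 ((uniq1 j r a hjr hj.1) ▸ hir)
          · rintro r ⟨hir, hjr⟩
            exact hi2 ((uniq2 j r b hjr hj.2) ▸ hir)
        simp [hi1, hi2, this]
    -- identity for generator pairs
    have gen : ∀ (a : Fin m1) (b : Fin m2),
        T *ᵥ ((fun k : Fin m => if k ∈ S1 a then (1:ℝ) else 0) *
          (fun k : Fin m => if k ∈ S2 b then (1:ℝ) else 0)) =
        (T *ᵥ fun k : Fin m => if k ∈ S1 a then (1:ℝ) else 0) *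
          (fun k : Fin m => if k ∈ S2 b then (1:ℝ) else 0) +
        (fun k : Fin m => if k ∈ S1 a then (1:ℝ) else 0) *
          (T *ᵥ fun k : Fin m => if k ∈ S2 b then (1:ℝ) else 0) := by
      intro a b
      funext i
      have hprod : ∀ k : Fin m,
          ((fun k : Fin m => if k ∈ S1 a then (1:ℝ) else 0) *
            (fun k : Fin m => if k ∈ S2 b then (1:ℝ) else 0)) k
            = (if k ∈ S1 a ∩ S2 b then (1:ℝ) else 0) := by
        intro k
        by_cases h1' : k ∈ S1 a <;> by_cases h2' : k ∈ S2 b <;>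
          simp [Pi.mul_apply, h1', h2']
      show ∑ k, T i k * _ = _
      calc ∑ k, T i k * ((fun k : Fin m => if k ∈ S1 a then (1:ℝ) else 0) *
              (fun k : Fin m => if k ∈ S2 b then (1:ℝ) else 0)) k
          = ∑ k, T i k * (if k ∈ S1 a ∩ S2 b then (1:ℝ) else 0) := by
            refine Finset.sum_congr rfl fun k _ => by rw [hprod k]
        _ = ∑ k ∈ S1 a ∩ S2 b, T i k := sum_ind _ _
        _ = _ := by
            rw [key a b i]
            show _ = ((T *ᵥ _) * _) i + (_ * (T *ᵥ _)) i
            simp only [Pi.mul_apply, Matrix.mulVec, dotProduct]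
            rw [sum_ind (S1 a) (fun j => T i j), sum_ind (S2 b) (fun j => T i j)]
    -- double span induction
    intro x hx y hy
    induction hx using Submodule.span_induction with
    | mem x hxmem =>
      obtain ⟨a, rfl⟩ := hxmem
      induction hy using Submodule.span_induction with
      | mem y hymem =>
        obtain ⟨b, rfl⟩ := hymem
        exact gen a b
      | zero => simp
      | add y z _ _ hy' hz' =>
        have : (fun k : Fin m => if k ∈ S1 a then (1:ℝ) else 0) * (y + z)
            = (fun k : Fin m => if k ∈ S1 a then (1:ℝ) else 0) * y +
              (fun k : Fin m => if k ∈ S1 a then (1:ℝ) else 0) * z := mul_add _ _ _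
        rw [this, Matrix.mulVec_add, hy', hz', Matrix.mulVec_add]
        ring
      | smul c y _ hy' =>
        have : (fun k : Fin m => if k ∈ S1 a then (1:ℝ) else 0) * (c • y)
            = c • ((fun k : Fin m => if k ∈ S1 a then (1:ℝ) else 0) * y) := by
          funext k; simp only [Pi.smul_apply, Pi.mul_apply, smul_eq_mul]; ring
        rw [this, Matrix.mulVec_smul, hy', Matrix.mulVec_smul, smul_add]
        congr 1
        · funext k; simp only [Pi.smul_apply, Pi.mul_apply, smul_eq_mul]; ring
        · funext k; simp only [Pi.smul_apply, Pi.mul_apply, smul_eq_mul]; ring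
    | zero => simp
    | add x z hxm hzm hx' hz' =>
      rw [add_mul, Matrix.mulVec_add, hx', hz', Matrix.mulVec_add]
      ring
    | smul c x hxm hx' =>
      have h1 : (c • x) * y = c • (x * y) := by
        funext k; simp only [Pi.smul_apply, Pi.mul_apply, smul_eq_mul]; ring
      rw [h1, Matrix.mulVec_smul, hx', Matrix.mulVec_smul, smul_add]
      congr 1
      · funext k; simp only [Pi.smul_apply, Pi.mul_apply, smul_eq_mul]; ring
      · funext k; simp only [Pi.smul_apply, Pi.mul_apply, smul_eq_mul]; ring
end

section
/- Let $\mathfrak{f}$ be a finite-dimensional simple Lie algebra and $\mathfrak{k}$ a Lie subalgebra of $n\mathfrak{f} = \mathfrak{f}^n$ containing the diagonal $\operatorname{diag}(\mathfrak{f}) = \{(X,\dots,X)\}$. Then there is a partition of $\{1,\dots,n\}$ into nonempty blocks $B_1,\dots,B_s$ such that $\mathfrak{k} = \{(Y_1,\dots,Y_n) : Y_i = Y_j \text{ whenever } i, j \text{ lie in the same block}\,,\ Y_i = X_r \text{ for } i \in B_r \text{ with arbitrary } X_1,\dots,X_s \in \mathfrak{f}\}$; i.e., $\mathfrak{k}$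 is the direct sum of the diagonals of the sub-sums $\bigoplus_{i \in B_r} \mathfrak{f}$. -/
/-- The componentwise Lie ring structure on `Fin n → L`. -/
instance piFinLieRing (n : ℕ) (L : Type*) [LieRing L] : LieRing (Fin n → L) :=
  { (inferInstance : AddCommGroup (Fin n → L)) with
    bracket := fun x y k => ⁅x k, y k⁆
    add_lie := fun x y z => funext fun k => add_lie (x k) (y k) (z k)
    lie_add := fun x y z => funext fun k => lie_add (x k) (y k) (z k)
    lie_self := fun x => funext fun k => lie_self (x k)
    leibniz_lie := fun x y z => funext fun k => leibniz_lie (x k) (y k) (z k) }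

/-- The componentwise Lie algebra structure on `Fin n → L`. -/
instance piFinLieAlgebra (n : ℕ) (L : Type*) [LieRing L] [LieAlgebra ℝ L] :
    LieAlgebra ℝ (Fin n → L) :=
  { lie_smul := fun t x y => funext fun k => lie_smul t (x k) (y k) }

section Aux

variable {n : ℕ} {L : Type*} [LieRing L] [LieAlgebra ℝ L] [LieAlgebra.IsSimple ℝ L]

lemma aux_exists_ne_zero : ∃ a : L, a ≠ 0 := by
  have h := LieAlgebra.IsSimple.non_abelian (R := ℝ) (L := L)
  by_contra hc
  push_neg at hc
  exact h ⟨fun x m => by rw [hc x, zero_lie]⟩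

lemma aux_bracket_ne (a : L) (ha : a ≠ 0) : ∃ b : L, ⁅b, a⁆ ≠ 0 := by
  by_contra hc
  push_neg at hc
  have : a ∈ LieAlgebra.center ℝ L := hc
  rw [LieAlgebra.center_eq_bot ℝ L, LieSubmodule.mem_bot] at this
  exact ha this

variable (K : LieSubalgebra ℝ (Fin n → L)) (hdiag : ∀ X : L, (fun _ : Fin n => X) ∈ K)

include hdiag in
lemma aux_lem1 (i j : Fin n) (h : ∃ Y, Y ∈ K ∧ Y i ≠ Y j) (a : L) :
    ∃ Y, Y ∈ K ∧ Y j = 0 ∧ Y i = a := by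
  let I : LieIdeal ℝ L :=
    { carrier := {x | ∃ Y, Y ∈ K ∧ Y j = 0 ∧ Y i = x}
      add_mem' := by
        rintro x y ⟨Y, hY, hYj, hYi⟩ ⟨Z, hZ, hZj, hZi⟩
        exact ⟨Y + Z, K.add_mem hY hZ, by simp [hYj, hZj], by simp [hYi, hZi]⟩
      zero_mem' := ⟨0, K.zero_mem, rfl, rfl⟩
      smul_mem' := by
        rintro c x ⟨Y, hY, hYj, hYi⟩
        exact ⟨c • Y, K.smul_mem c hY, by simp [hYj], by simp [hYi]⟩
      lie_mem := by
        rintro z x ⟨Y, hY, hYj, hYi⟩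
        refine ⟨⁅(fun _ => z), Y⁆, K.lie_mem (hdiag z) hY, ?_, ?_⟩
        · show ⁅z, Y j⁆ = 0; rw [hYj, lie_zero]
        · show ⁅z, Y i⁆ = ⁅z, x⁆; rw [hYi] }
  have hne : I ≠ ⊥ := by
    obtain ⟨Y, hY, hij⟩ := h
    have hmem : (Y i - Y j) ∈ I :=
      ⟨Y - (fun _ => Y j), K.sub_mem hY (hdiag (Y j)), by simp, by simp⟩
    intro hbot
    rw [hbot, LieSubmodule.mem_bot, sub_eq_zero] at hmem
    exact hij hmem
  have htop : I = ⊤ := (LieAlgebra.IsSimple.eq_bot_or_eq_top I).resolve_left hne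
  have hmem : a ∈ I := by rw [htop]; exact LieSubmodule.mem_top a
  exact hmem

include hdiag in
lemma aux_lem2 (i : Fin n) (S : Finset (Fin n))
    (hS : ∀ j ∈ S, ∃ Y, Y ∈ K ∧ Y i ≠ Y j) :
    ∃ Y, Y ∈ K ∧ Y i ≠ 0 ∧ ∀ j ∈ S, Y j = 0 := by
  classical
  induction S using Finset.induction with
  | empty =>
    obtain ⟨a, ha⟩ := aux_exists_ne_zero (L := L)
    exact ⟨fun _ => a, hdiag a, ha, by simp⟩
  | @insert j₀ S' hj₀ ih =>
    obtain ⟨Y, hY, hYi, hYS⟩ := ih (fun j hj => hS j (Finset.mem_insert_of_mem hj))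
    obtain ⟨b, hb⟩ := aux_bracket_ne (Y i) hYi
    obtain ⟨Z, hZ, hZj₀, hZi⟩ :=
      aux_lem1 K hdiag i j₀ (hS j₀ (Finset.mem_insert_self _ _)) b
    refine ⟨⁅Z, Y⁆, K.lie_mem hZ hY, ?_, ?_⟩
    · show ⁅Z i, Y i⁆ ≠ 0; rw [hZi]; exact hb
    · intro j hj
      rcases Finset.mem_insert.mp hj with h | h
      · show ⁅Z j, Y j⁆ = 0; rw [h, hZj₀, zero_lie]
      · show ⁅Z j, Y j⁆ = 0; rw [hYS j h, lie_zero]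

include hdiag in
lemma aux_lem3 (i : Fin n) (X : L) :
    ∃ Y, Y ∈ K ∧ (∀ j, (∀ W, W ∈ K → W i = W j) → Y j = X) ∧
      (∀ j, ¬(∀ W, W ∈ K → W i = W j) → Y j = 0) := by
  classical
  set S : Finset (Fin n) := Finset.univ.filter (fun j => ¬(∀ W, W ∈ K → W i = W j)) with hSdef
  have hSmem : ∀ j, j ∈ S ↔ ¬(∀ W, W ∈ K → W i = W j) := by
    intro j; simp [hSdef]
  have hS : ∀ j ∈ S, ∃ Y, Y ∈ K ∧ Y i ≠ Y j := by
    intro j hj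
    have := (hSmem j).mp hj
    push_neg at this
    exact this
  obtain ⟨Y₀, hY₀, hY₀i, hY₀S⟩ := aux_lem2 K hdiag i S hS
  let I : LieIdeal ℝ L :=
    { carrier := {x | ∃ Y, Y ∈ K ∧ Y i = x ∧ ∀ j ∈ S, Y j = 0}
      add_mem' := by
        rintro x y ⟨Y, hY, hYi, hYS⟩ ⟨Z, hZ, hZi, hZS⟩
        exact ⟨Y + Z, K.add_mem hY hZ, by simp [hYi, hZi],
          fun j hj => by simp [hYS j hj, hZS j hj]⟩
      zero_mem' := ⟨0, K.zero_mem, rfl, fun j _ => rfl⟩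
      smul_mem' := by
        rintro c x ⟨Y, hY, hYi, hYS⟩
        exact ⟨c • Y, K.smul_mem c hY, by simp [hYi], fun j hj => by simp [hYS j hj]⟩
      lie_mem := by
        rintro z x ⟨Y, hY, hYi, hYS⟩
        refine ⟨⁅(fun _ => z), Y⁆, K.lie_mem (hdiag z) hY, ?_, ?_⟩
        · show ⁅z, Y i⁆ = ⁅z, x⁆; rw [hYi]
        · intro j hj; show ⁅z, Y j⁆ = 0; rw [hYS j hj, lie_zero] }
  have hne : I ≠ ⊥ := by
    intro hbot
    have hmem : Y₀ i ∈ I := ⟨Y₀, hY₀, rfl, hY₀S⟩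
    rw [hbot, LieSubmodule.mem_bot] at hmem
    exact hY₀i hmem
  have htop : I = ⊤ := (LieAlgebra.IsSimple.eq_bot_or_eq_top I).resolve_left hne
  have hmem : X ∈ I := by rw [htop]; exact LieSubmodule.mem_top X
  obtain ⟨Y, hY, hYi, hYS⟩ := hmem
  refine ⟨Y, hY, ?_, ?_⟩
  · intro j hj
    rw [← hj Y hY, hYi]
  · intro j hj
    exact hYS j ((hSmem j).mpr hj)

end Aux

/-- Lemma 2.5: every Lie subalgebra of `n𝔣` containing the diagonal is the
block-diagonal subalgebra associated with a partition of `{1,…,n}`. -/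
theorem stmt_17 (n : ℕ) (L : Type*) [LieRing L] [LieAlgebra ℝ L]
    [Module.Finite ℝ L] [LieAlgebra.IsSimple ℝ L]
    (K : LieSubalgebra ℝ (Fin n → L))
    (hdiag : ∀ X : L, (fun _ : Fin n => X) ∈ K) :
    ∃ (s : ℕ) (B : Fin s → Finset (Fin n)),
      (∀ r, (B r).Nonempty) ∧
      (∀ r r', r ≠ r' → Disjoint (B r) (B r')) ∧
      (Finset.univ.biUnion B = Finset.univ) ∧
      (K : Set (Fin n → L)) =
        {Y : Fin n → L | ∀ (r : Fin s) (i j : Fin n), i ∈ B r → j ∈ B r → Y i = Y j} := by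
  classical
  let sd : Setoid (Fin n) :=
    ⟨fun i j => ∀ W, W ∈ K → W i = W j,
      ⟨fun i W _ => rfl, fun h W hW => (h W hW).symm,
        fun h1 h2 W hW => (h1 W hW).trans (h2 W hW)⟩⟩
  letI : DecidableRel ((· ≈ ·) : Fin n → Fin n → Prop) := fun _ _ => Classical.dec _
  letI : Fintype (Quotient sd) := Quotient.fintype sd
  let e : Fin (Fintype.card (Quotient sd)) ≃ Quotient sd := (Fintype.equivFin _).symm
  refine ⟨Fintype.card (Quotient sd),
    fun r => Finset.univ.filter (fun i => (⟦i⟧ : Quotient sd) = e r), ?_, ?_, ?_, ?_⟩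
  · intro r
    exact ⟨(e r).out, Finset.mem_filter.mpr ⟨Finset.mem_univ _, Quotient.out_eq _⟩⟩
  · intro r r' hrr'
    rw [Finset.disjoint_left]
    intro i hi hi'
    simp only [Finset.mem_filter] at hi hi'
    exact hrr' (e.injective (hi.2 ▸ hi'.2))
  · ext i
    simp only [Finset.mem_univ, iff_true]
    exact Finset.mem_biUnion.mpr ⟨e.symm ⟦i⟧, Finset.mem_univ _,
      Finset.mem_filter.mpr ⟨Finset.mem_univ _, (e.apply_symm_apply _).symm⟩⟩
  · ext Y
    simp only [SetLike.mem_coe, Set.mem_setOf_eq]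
    constructor
    · intro hY r i j hi hj
      simp only [Finset.mem_filter] at hi hj
      have : (⟦i⟧ : Quotient sd) = ⟦j⟧ := hi.2.trans hj.2.symm
      exact Quotient.exact this Y hY
    · intro hY
      have hconst : ∀ i j : Fin n, (⟦i⟧ : Quotient sd) = ⟦j⟧ → Y i = Y j := by
        intro i j hij
        have hi : i ∈ Finset.univ.filter (fun k => (⟦k⟧ : Quotient sd) = e (e.symm ⟦i⟧)) :=
          Finset.mem_filter.mpr ⟨Finset.mem_univ _, (e.apply_symm_apply ⟦i⟧).symm⟩
        have hj : j ∈ Finset.univ.filter (fun k => (⟦k⟧ : Quotient sd) = e (e.symm ⟦i⟧)) :=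
          Finset.mem_filter.mpr ⟨Finset.mem_univ _,
            by rw [e.apply_symm_apply]; exact hij.symm⟩
        exact hY (e.symm ⟦i⟧) i j hi hj
      choose Z hZmem hZeq hZzero using
        fun c : Quotient sd => aux_lem3 K hdiag c.out (Y c.out)
      have hsum : (∑ c : Quotient sd, Z c) ∈ K := by
        exact Submodule.sum_mem K.toSubmodule (fun c _ => hZmem c)
      have heq : (∑ c : Quotient sd, Z c) = Y := by
        funext j
        rw [Finset.sum_apply]
        rw [Finset.sum_eq_single (⟦j⟧ : Quotient sd)]
        · have h1 : ∀ W, W ∈ K → W (⟦j⟧ : Quotient sd).out = W j := by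
            have : (⟦(⟦j⟧ : Quotient sd).out⟧ : Quotient sd) = ⟦j⟧ := Quotient.out_eq _
            exact Quotient.exact this
          rw [hZeq _ j h1]
          exact hconst _ j (Quotient.out_eq _)
        · intro c _ hc
          refine hZzero c j ?_
          intro h
          apply hc
          have : (⟦c.out⟧ : Quotient sd) = ⟦j⟧ := Quotient.sound h
          rw [← this, Quotient.out_eq]
        · intro h; exact absurd (Finset.mem_univ _) h
      rw [← heq]
      exact hsum
end

section
/- Let $E_1, E_2, E_3$ span a copy of $\mathfrak{su}(2)$ with $[E_1,E_2]=E_3$, $[E_2,E_3]=E_1$, $[E_3,E_1]=E_2$, inside a compact simple Lie algebra $\mathfrak{f}$. Suppose real numbers $\gamma_i, \gamma_j, \gamma_k$ (positive) and $a^j_i, a^k_i, a^i_j, a^k_j, a^i_k, a^j_k$ and an element $Z_0 \in \mathfrak{f}$ satisfy: $-(\gamma_i-\gamma_j)a^j_i E_3 + (\gamma_i-\gamma_k)a^k_i E_2 + \gamma_i[Z_0,E_1] = 0$, $-(\gamma_j-\gamma_k)a^k_j E_1 + (\gamma_j-\gamma_i)a^i_j E_3 + \gamma_j[Z_0,E_2]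 = 0$, $-(\gamma_k-\gamma_i)a^i_k E_2 + (\gamma_k-\gamma_j)a^j_k E_1 + \gamma_k[Z_0,E_3] = 0$. Then $Z_0$ lies in the normalizer of $\operatorname{Span}(E_1,E_2,E_3)$ in $\mathfrak{f}$, and writing $Z_0 = d_1E_1 + d_2E_2 + d_3E_3 + Z_0'$ with $Z_0'$ in the centralizer of $\operatorname{Span}(E_1,E_2,E_3)$, one obtains $(\gamma_j - \gamma_i) a^i_j = -\gamma_j d_1$ and $(\gamma_k - \gamma_i) a^i_k = -\gamma_k d_1$; in particular $(1 - \gamma_i/\gamma_j) a^i_j = (1 - \gamma_i/\gamma_k) a^i_k$. -/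
/-- The `𝔰𝔲(2)` computation in the proof of Theorem 4.1: from the three equations it
follows that `Z₀` normalizes `Span(E₁,E₂,E₃)`, and for any decomposition
`Z₀ = d₁E₁ + d₂E₂ + d₃E₃ + Z₀'` with `Z₀'` centralizing the span one gets
`(γⱼ-γᵢ)aⁱⱼ = -γⱼd₁`, `(γₖ-γᵢ)aⁱₖ = -γₖd₁`, hence
`(1-γᵢ/γⱼ)aⁱⱼ = (1-γᵢ/γₖ)aⁱₖ`. -/
theorem stmt_18 (F : Type*) [LieRing F] [LieAlgebra ℝ F]
    [Module.Finite ℝ F] [LieAlgebra.IsSimple ℝ F]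
    (E1 E2 E3 : F) (hE : LinearIndependent ℝ ![E1, E2, E3])
    (h12 : ⁅E1, E2⁆ = E3) (h23 : ⁅E2, E3⁆ = E1) (h31 : ⁅E3, E1⁆ = E2)
    (γi γj γk : ℝ) (hγi : 0 < γi) (hγj : 0 < γj) (hγk : 0 < γk)
    (aji aki aij akj aik ajk : ℝ) (Z0 : F)
    (eq1 : -((γi - γj) * aji) • E3 + ((γi - γk) * aki) • E2 + γi • ⁅Z0, E1⁆ = 0)
    (eq2 : -((γj - γk) * akj) • E1 + ((γj - γi) * aij) • E3 + γj • ⁅Z0, E2⁆ = 0)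
    (eq3 : -((γk - γi) * aik) • E2 + ((γk - γj) * ajk) • E1 + γk • ⁅Z0, E3⁆ = 0) :
    (∀ W ∈ Submodule.span ℝ {E1, E2, E3}, ⁅Z0, W⁆ ∈ Submodule.span ℝ {E1, E2, E3}) ∧
    (∀ (d1 d2 d3 : ℝ) (Z0' : F),
      Z0 = d1 • E1 + d2 • E2 + d3 • E3 + Z0' →
      ⁅Z0', E1⁆ = 0 → ⁅Z0', E2⁆ = 0 → ⁅Z0', E3⁆ = 0 →
      (γj - γi) * aij = -(γj * d1) ∧ (γk - γi) * aik = -(γk * d1) ∧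
        (1 - γi / γj) * aij = (1 - γi / γk) * aik) := by
  have hind : ∀ c1 c2 c3 : ℝ, c1 • E1 + c2 • E2 + c3 • E3 = 0 →
      c1 = 0 ∧ c2 = 0 ∧ c3 = 0 := by
    intro c1 c2 c3 h
    have := Fintype.linearIndependent_iff.mp hE ![c1, c2, c3]
      (by simpa [Fin.sum_univ_three] using h)
    exact ⟨this 0, this 1, this 2⟩
  set S := Submodule.span ℝ ({E1, E2, E3} : Set F) with hS
  have hE1 : E1 ∈ S := Submodule.subset_span (by simp)
  have hE2 : E2 ∈ S := Submodule.subset_span (by simp)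
  have hE3 : E3 ∈ S := Submodule.subset_span (by simp)
  have hsc : ∀ (c : ℝ) (x : F), c ≠ 0 → c • x ∈ S → x ∈ S := by
    intro c x hc hx
    have : x = c⁻¹ • (c • x) := by rw [smul_smul, inv_mul_cancel₀ hc, one_smul]
    rw [this]; exact S.smul_mem _ hx
  have hb1 : ⁅Z0, E1⁆ ∈ S := by
    apply hsc γi _ hγi.ne'
    have : γi • ⁅Z0, E1⁆ = ((γi - γj) * aji) • E3 - ((γi - γk) * aki) • E2 := by
      have := eq1; rw [← sub_eq_zero]; linear_combination (norm := module) this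
    rw [this]; exact S.sub_mem (S.smul_mem _ hE3) (S.smul_mem _ hE2)
  have hb2 : ⁅Z0, E2⁆ ∈ S := by
    apply hsc γj _ hγj.ne'
    have : γj • ⁅Z0, E2⁆ = ((γj - γk) * akj) • E1 - ((γj - γi) * aij) • E3 := by
      have := eq2; rw [← sub_eq_zero]; linear_combination (norm := module) this
    rw [this]; exact S.sub_mem (S.smul_mem _ hE1) (S.smul_mem _ hE3)
  have hb3 : ⁅Z0, E3⁆ ∈ S := by
    apply hsc γk _ hγk.ne'
    have : γk • ⁅Z0, E3⁆ = ((γk - γi) * aik) • E2 - ((γk - γj) * ajk) • E1 := by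
      have := eq3; rw [← sub_eq_zero]; linear_combination (norm := module) this
    rw [this]; exact S.sub_mem (S.smul_mem _ hE2) (S.smul_mem _ hE1)
  constructor
  · intro W hW
    induction hW using Submodule.span_induction with
    | mem x hx =>
      rcases hx with rfl | rfl | rfl
      · exact hb1
      · exact hb2
      · exact hb3
    | zero => simp
    | add x y _ _ hx hy => rw [lie_add]; exact S.add_mem hx hy
    | smul c x _ hx => rw [lie_smul]; exact S.smul_mem _ hx
  · intro d1 d2 d3 Z0' hZ hc1 hc2 hc3
    have br2 : ⁅Z0, E2⁆ = d1 • E3 - d3 • E1 := by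
      rw [hZ]; simp [h12, h23, hc2, lie_smul]
      rw [show ⁅E3, E2⁆ = -E1 from by rw [← lie_skew, h23]]; module
    have br3 : ⁅Z0, E3⁆ = d2 • E1 - d1 • E2 := by
      rw [hZ]; simp [h23, hc3, lie_smul]
      rw [show ⁅E1, E3⁆ = -E2 from by rw [← lie_skew, h31]]; module
    have key2 : ((γj - γi) * aij + γj * d1) = 0 ∧ True := by
      have h0 : (-((γj - γk) * akj) - γj * d3) • E1 + (0:ℝ) • E2 +
          ((γj - γi) * aij + γj * d1) • E3 = 0 := by
        have := eq2; rw [br2] at this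
        linear_combination (norm := module) this
      exact ⟨(hind _ _ _ h0).2.2, trivial⟩
    have key3 : (-((γk - γi) * aik) - γk * d1) = 0 := by
      have h0 : ((γk - γj) * ajk + γk * d2) • E1 +
          (-((γk - γi) * aik) - γk * d1) • E2 + (0:ℝ) • E3 = 0 := by
        have := eq3; rw [br3] at this
        linear_combination (norm := module) this
      exact (hind _ _ _ h0).2.1
    have e1 : (γj - γi) * aij = -(γj * d1) := by linarith [key2.1]
    have e2 : (γk - γi) * aik = -(γk * d1) := by linarith [key3]
    refine ⟨e1, e2, ?_⟩
    have : (1 - γi / γj) * aij = -d1 := by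
      field_simp
      linarith [e1]
    rw [this]
    have : (1 - γi / γk) * aik = -d1 := by
      field_simp
      linarith [e2]
    rw [this]
end
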